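/- arXiv:2604.15191 — 4 statements merged into one kernel-verified Lean document; each statement's English description precedes it below -/
import Mathlib

section
/- For every ε > 0 and every x ∈ 𝕋^d, the map y ↦ c_ε(x,y) is 1-semiconcave on 𝕋^d; explicitly, for all λ ∈ [0,1], all y₁, y₂ ∈ 𝕋^d, and every z ∈ 𝕋^d with dist(z,y₁) = λ·dist(y₁,y₂) and dist(z,y₂) = (1−λ)·dist(y₁,y₂), one has c_ε(x,z) ≥ (1−λ)·c_ε(x,y₁) + λ·c_ε(x,y₂) − (1/2)·λ(1−λ)·dist(y₁,y₂)². -/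
open MeasureTheory Real

noncomputable section

instance : Fact ((0:ℝ) < 2 * Real.pi) := ⟨by positivity⟩

/-- The flat torus `𝕋^d = ℝ^d / (2πℤ)^d`, as a product of additive circles. -/
abbrev Torus (d : ℕ) : Type := Fin d → AddCircle (2 * Real.pi)

namespace Torus

variable {d : ℕ}

/-- The canonical lift of a torus point to `ℝ^d` (componentwise representative in `[0, 2π)`). -/
noncomputable def lift (x : Torus d) : Fin d → ℝ :=
  fun i => (AddCircle.equivIco (2 * Real.pi) 0 (x i) : ℝ)

/-- The flat torus distance `dist(x,y) = min_{k ∈ ℤ^d} ‖x - y - 2πk‖` (Euclidean norm). -/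
noncomputable def tdist (x y : Torus d) : ℝ :=
  ⨅ k : Fin d → ℤ, Real.sqrt (∑ i, (lift x i - lift y i - 2 * Real.pi * (k i)) ^ 2)

/-- The Gaussian (heat) kernel `K_ε` on the torus. -/
noncomputable def gker (ε : ℝ) (x : Torus d) : ℝ :=
  (2 * Real.pi * ε) ^ (-(d : ℝ) / 2) *
    ∑' k : Fin d → ℤ,
      Real.exp (-(∑ i, (lift x i - 2 * Real.pi * (k i)) ^ 2) / (2 * ε))

/-- The cost function `c_ε(x,y) = -ε log K_ε(x - y)`. -/
noncomputable def cost (ε : ℝ) (x y : Torus d) : ℝ := -(ε * Real.log (gker ε (x - y)))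

/-- The operator `𝒯_μ^ε[φ](y) = -ε log ∫ exp((φ(x) - c_ε(x,y))/ε) dμ(x)`. -/
noncomputable def Tmap (ε : ℝ) (μ : Measure (Torus d)) (φ : Torus d → ℝ) (y : Torus d) : ℝ :=
  -(ε * Real.log (∫ x, Real.exp ((φ x - cost ε x y) / ε) ∂μ))

/-- The Schrödinger functional `I_{μ,ν}^ε[φ] = ∫ φ dμ + ∫ 𝒯_μ^ε[φ] dν`. -/
noncomputable def SchFun (ε : ℝ) (μ ν : Measure (Torus d)) (φ : Torus d → ℝ) : ℝ :=
  (∫ x, φ x ∂μ) + ∫ y, Tmap ε μ φ y ∂ν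

/-- The Schrödinger functional `Ī_{μ,ν}^ε[ψ] = ∫ 𝒯_ν^ε[ψ] dμ + ∫ ψ dν`. -/
noncomputable def SchFunBar (ε : ℝ) (μ ν : Measure (Torus d)) (ψ : Torus d → ℝ) : ℝ :=
  (∫ x, Tmap ε ν ψ x ∂μ) + ∫ y, ψ y ∂ν

/-- `(φ, ψ)` is a pair of Schrödinger potentials for `(μ, ν, ε)`. -/
structure IsSchrodingerPotentials (ε : ℝ) (μ ν : Measure (Torus d))
    (φ ψ : Torus d → ℝ) : Prop where
  cont_phi : Continuous φ
  cont_psi : Continuous ψ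
  eq_psi : ψ = Tmap ε μ φ
  eq_phi : φ = Tmap ε ν ψ
  max_phi : ∀ g : Torus d → ℝ, Continuous g → SchFun ε μ ν g ≤ SchFun ε μ ν φ
  max_psi : ∀ g : Torus d → ℝ, Continuous g → SchFunBar ε μ ν g ≤ SchFunBar ε μ ν ψ

/-- Variance of `f` under the probability measure `m`. -/
noncomputable def Var (m : Measure (Torus d)) (f : Torus d → ℝ) : ℝ :=
  ∫ x, (f x - ∫ y, f y ∂m) ^ 2 ∂m

/-- Oscillation `osc f = sup f - inf f`. -/
noncomputable def osc (f : Torus d → ℝ) : ℝ := (⨆ x, f x) - ⨅ x, f x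

/-- `μ` has density `f` with respect to the Lebesgue (Haar) measure on the torus. -/
def HasDensity (μ : Measure (Torus d)) (f : Torus d → ℝ) : Prop :=
  μ = (volume : Measure (Torus d)).withDensity (fun x => ENNReal.ofReal (f x))

end Torus

open Torus
namespace Torus

variable {d : ℕ}

/-- The probability measure `π_y[φ]`, with density
`exp((φ(x) - c_ε(x,y))/ε) / ∫ exp((φ(x') - c_ε(x',y))/ε) dμ(x')` with respect to `μ`. -/
noncomputable def piY (ε : ℝ) (μ : Measure (Torus d)) (φ : Torus d → ℝ) (y : Torus d) :
    Measure (Torus d) :=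
  μ.withDensity fun x => ENNReal.ofReal
    (Real.exp ((φ x - cost ε x y) / ε) / ∫ x', Real.exp ((φ x' - cost ε x' y) / ε) ∂μ)

/-- The probability measure `π^ν[φ] : A ↦ ∫ π_y[φ](A) dν(y)`. -/
noncomputable def piNu (ε : ℝ) (μ ν : Measure (Torus d)) (φ : Torus d → ℝ) :
    Measure (Torus d) :=
  ν.bind fun y => piY ε μ φ y

/-- The probability measure `γ_Q` on the torus, with density proportional to
`1_{B(x₀,r)}(x) exp(-dist(x₀,x)²/α)`. -/
noncomputable def gammaQ (x₀ : Torus d) (r α : ℝ) : Measure (Torus d) :=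
  ((volume.withDensity fun x => ENNReal.ofReal
      (if tdist x₀ x < r then Real.exp (-(tdist x₀ x) ^ 2 / α) else 0)) Set.univ)⁻¹ •
    (volume.withDensity fun x => ENNReal.ofReal
      (if tdist x₀ x < r then Real.exp (-(tdist x₀ x) ^ 2 / α) else 0))

/-- Normalized restriction `ν_Q(A) = ν(A ∩ Q) / ν(Q)`. -/
noncomputable def normRestrict (ν : Measure (Torus d)) (Q : Set (Torus d)) :
    Measure (Torus d) :=
  (ν Q)⁻¹ • ν.restrict Q

open Classical in
/-- Kullback–Leibler divergence: `KL(P‖Q) = ∫ log(dP/dQ) dP` if `P ≪ Q`, `+∞` otherwise. -/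
noncomputable def KLdiv {α : Type*} [MeasurableSpace α] (P Q : Measure α) : EReal :=
  if P ≪ Q then ((∫ x, Real.log ((P.rnDeriv Q x).toReal) ∂P : ℝ) : EReal) else ⊤

/-- Convolution with the Gaussian kernel: `(K_ε ∗ f)(x) = ∫ K_ε(x - y) f(y) dy`. -/
noncomputable def gconv (ε : ℝ) (f : Torus d → ℝ) (x : Torus d) : ℝ :=
  ∫ y, gker ε (x - y) * f y

/-- The measure `π_{μ,ε}` on `𝕋^d × 𝕋^d` given by `dπ_{μ,ε}(x,y) = K_ε(y - x) dy dμ(x)`. -/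
noncomputable def piProd (ε : ℝ) (μ : Measure (Torus d)) : Measure (Torus d × Torus d) :=
  (μ.prod (volume : Measure (Torus d))).withDensity fun p =>
    ENNReal.ofReal (gker ε (p.2 - p.1))

end Torus

section AuxStatement2

open Real

/-! ### Auxiliary machinery for `statement2` -/

lemma aux_summable_gauss_nat (ε c : ℝ) (hε : 0 < ε) :
    Summable fun n : ℕ => Real.exp (-(c - 2 * π * n) ^ 2 / (2 * ε)) := by
  set u : ℝ := ε / (2 * π) with hu
  set M : ℝ := (u ^ 2 + 2 * u * c) / (2 * ε) with hM
  refine Summable.of_nonneg_of_le (fun n => (Real.exp_pos _).le)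
    (fun n => ?_) ((Real.summable_exp_neg_nat).mul_left (Real.exp M))
  rw [← Real.exp_add]
  refine Real.exp_le_exp.mpr ?_
  have hπ := Real.pi_pos
  have key : -(c - 2 * π * n) ^ 2 / (2 * ε) - (M + -(n : ℝ))
      = -((2 * π * n - c - u) ^ 2) / (2 * ε) := by
    rw [hM, hu]; field_simp; ring
  have h2 : -((2 * π * (n:ℝ) - c - u) ^ 2) / (2 * ε) ≤ 0 := by
    apply div_nonpos_of_nonpos_of_nonneg (neg_nonpos_of_nonneg (sq_nonneg _)); positivity
  linarith

lemma aux_summable_gauss_int (ε c : ℝ) (hε : 0 < ε) :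
    Summable fun k : ℤ => Real.exp (-(c - 2 * π * k) ^ 2 / (2 * ε)) := by
  refine Summable.of_nat_of_neg ?_ ?_
  · simpa using aux_summable_gauss_nat ε c hε
  · have := aux_summable_gauss_nat ε (-c) hε
    refine this.congr fun n => ?_
    push_cast
    ring_nf

/-- The periodic Gaussian sum. -/
noncomputable def Gs (d : ℕ) (ε : ℝ) (v : Fin d → ℝ) : ℝ :=
  ∑' k : Fin d → ℤ, Real.exp (-(∑ i, (v i - 2 * π * (k i)) ^ 2) / (2 * ε))

lemma aux_summable_Gs (d : ℕ) (ε : ℝ) (hε : 0 < ε) (v : Fin d → ℝ) :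
    Summable fun k : Fin d → ℤ =>
      Real.exp (-(∑ i, (v i - 2 * π * (k i)) ^ 2) / (2 * ε)) := by
  induction d with
  | zero =>
      haveI : Finite (Fin 0 → ℤ) := Finite.of_subsingleton
      exact Summable.of_finite
  | succ n ih =>
      let e : ℤ × (Fin n → ℤ) ≃ (Fin (n+1) → ℤ) := Fin.consEquiv fun _ => ℤ
      rw [← e.summable_iff]
      have H : Summable fun p : ℤ × (Fin n → ℤ) =>
          Real.exp (-(v 0 - 2 * π * p.1) ^ 2 / (2 * ε)) *
          Real.exp (-(∑ i : Fin n, (v i.succ - 2 * π * (p.2 i)) ^ 2) / (2 * ε)) :=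
        Summable.mul_of_nonneg
          (f := fun j : ℤ => Real.exp (-(v 0 - 2 * π * j) ^ 2 / (2 * ε)))
          (g := fun k : Fin n → ℤ =>
            Real.exp (-(∑ i : Fin n, (v i.succ - 2 * π * (k i)) ^ 2) / (2 * ε)))
          (aux_summable_gauss_int ε (v 0) hε) (ih (fun i => v i.succ))
          (fun _ => (Real.exp_pos _).le) (fun _ => (Real.exp_pos _).le)
      refine H.congr fun p => ?_
      rw [← Real.exp_add]
      congr 1
      have h0 : ∀ i : Fin n, (e p) i.succ = p.2 i := fun i => by simp [e, Fin.consEquiv]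
      have h1 : (e p) 0 = p.1 := by simp [e, Fin.consEquiv]
      rw [Fin.sum_univ_succ, ← add_div, ← neg_add, h1]
      simp only [h0]

lemma aux_Gs_pos (d : ℕ) (ε : ℝ) (hε : 0 < ε) (v : Fin d → ℝ) : 0 < Gs d ε v :=
  Summable.tsum_pos (aux_summable_Gs d ε hε v) (fun _ => (Real.exp_pos _).le) 0 (Real.exp_pos _)

/-- invariance of `Gs` under shifts by the lattice `2πℤ^d`. -/
lemma aux_Gs_congr (d : ℕ) (ε : ℝ) (u v : Fin d → ℝ)
    (h : ∀ i, ∃ n : ℤ, u i - v i = 2 * π * n) : Gs d ε u = Gs d ε v := by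
  choose m hm using h
  simp only [Gs]
  rw [← (Equiv.subRight m).tsum_eq fun k : Fin d → ℤ =>
    Real.exp (-(∑ i, (v i - 2 * π * (k i)) ^ 2) / (2 * ε))]
  apply tsum_congr
  intro k
  have hs : ∀ i : Fin d, v i - 2 * π * ((((Equiv.subRight m) k) i : ℤ) : ℝ)
      = u i - 2 * π * (k i) := by
    intro i
    have h1 : ((Equiv.subRight m) k) i = k i - m i := rfl
    rw [h1]; push_cast; linarith [hm i]
  congr 1
  congr 1
  congr 1
  exact (Finset.sum_congr rfl fun i _ => by rw [hs i]).symm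

lemma aux_Gs_holder (d : ℕ) (ε : ℝ) (hε : 0 < ε) (lam : ℝ) (h0 : 0 < lam) (h1 : lam < 1)
    (a b : Fin d → ℝ) :
    Real.log (Gs d ε (fun i => (1 - lam) * a i + lam * b i)) ≤
      (1 - lam) * Real.log (Gs d ε a) + lam * Real.log (Gs d ε b) +
        lam * (1 - lam) * (∑ i, (a i - b i) ^ 2) / (2 * ε) := by
  set S : ℝ := ∑ i, (a i - b i) ^ 2 with hS
  set K : ℝ := lam * (1 - lam) * S / (2 * ε) with hK
  set f : (Fin d → ℤ) → ℝ := fun k =>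
    Real.exp (-(∑ i, (a i - 2 * π * (k i)) ^ 2) / (2 * ε)) with hf
  set g : (Fin d → ℤ) → ℝ := fun k =>
    Real.exp (-(∑ i, (b i - 2 * π * (k i)) ^ 2) / (2 * ε)) with hg
  have hml : 1 - lam ≠ 0 := by linarith
  have hl : lam ≠ 0 := ne_of_gt h0
  have hpt : ∀ k : Fin d → ℤ,
      Real.exp (-(∑ i, ((1 - lam) * a i + lam * b i - 2 * π * (k i)) ^ 2) / (2 * ε))
        = Real.exp K * (f k ^ (1 - lam) * g k ^ lam) := by
    intro k
    rw [hf, hg]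
    simp only []
    rw [← Real.exp_mul, ← Real.exp_mul, ← Real.exp_add, ← Real.exp_add]
    congr 1
    have hsum : (∑ i, ((1 - lam) * a i + lam * b i - 2 * π * (k i)) ^ 2)
        = (1 - lam) * (∑ i, (a i - 2 * π * (k i)) ^ 2)
          + lam * (∑ i, (b i - 2 * π * (k i)) ^ 2) - lam * (1 - lam) * S := by
      rw [hS, Finset.mul_sum, Finset.mul_sum, Finset.mul_sum, ← Finset.sum_add_distrib,
        ← Finset.sum_sub_distrib]
      exact Finset.sum_congr rfl fun i _ => by ring
    rw [hsum, hK]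
    field_simp
    ring
  have hpq : Real.HolderConjugate (1 - lam)⁻¹ lam⁻¹ := by
    constructor
    · rw [inv_inv, inv_inv, inv_one]; ring
    · rw [inv_pos]; linarith
    · rw [inv_pos]; linarith
  have hrw : ∀ (F : (Fin d → ℤ) → ℝ) (c : ℝ), c ≠ 0 →
      (∀ k, 0 < F k) → ∀ k, (F k ^ c) ^ c⁻¹ = F k := by
    intro F c hc hF k
    rw [← Real.rpow_mul (hF k).le, mul_inv_cancel₀ hc, Real.rpow_one]
  have hfs : Summable fun k => (f k ^ (1 - lam)) ^ (1 - lam)⁻¹ := by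
    refine (aux_summable_Gs d ε hε a).congr fun k => ?_
    rw [hrw f (1 - lam) hml (fun k => Real.exp_pos _)]
  have hgs : Summable fun k => (g k ^ lam) ^ lam⁻¹ := by
    refine (aux_summable_Gs d ε hε b).congr fun k => ?_
    rw [hrw g lam hl (fun k => Real.exp_pos _)]
  have holder := inner_le_Lp_mul_Lq_tsum_of_nonneg hpq
    (f := fun k => f k ^ (1 - lam)) (g := fun k => g k ^ lam)
    (fun k => Real.rpow_nonneg (Real.exp_pos _).le _)
    (fun k => Real.rpow_nonneg (Real.exp_pos _).le _) hfs hgs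
  have hA : (∑' k, (f k ^ (1 - lam)) ^ (1 - lam)⁻¹) = Gs d ε a :=
    tsum_congr fun k => hrw f (1 - lam) hml (fun k => Real.exp_pos _) k
  have hB : (∑' k, (g k ^ lam) ^ lam⁻¹) = Gs d ε b :=
    tsum_congr fun k => hrw g lam hl (fun k => Real.exp_pos _) k
  rw [hA, hB, one_div, one_div, inv_inv, inv_inv] at holder
  have hGw : Gs d ε (fun i => (1 - lam) * a i + lam * b i)
      ≤ Real.exp K * ((Gs d ε a) ^ (1 - lam) * (Gs d ε b) ^ lam) := by
    rw [Gs]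
    calc ∑' k : Fin d → ℤ,
        Real.exp (-(∑ i, ((1 - lam) * a i + lam * b i - 2 * π * (k i)) ^ 2) / (2 * ε))
        = Real.exp K * ∑' k, f k ^ (1 - lam) * g k ^ lam := by
          rw [← tsum_mul_left]; exact tsum_congr hpt
      _ ≤ Real.exp K * ((Gs d ε a) ^ (1 - lam) * (Gs d ε b) ^ lam) := by
          apply mul_le_mul_of_nonneg_left holder (Real.exp_pos _).le
  have hGa := aux_Gs_pos d ε hε a
  have hGb := aux_Gs_pos d ε hε b
  have hlog := Real.log_le_log (aux_Gs_pos d ε hε _) hGw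
  rw [Real.log_mul (Real.exp_pos _).ne'
      (mul_pos (Real.rpow_pos_of_pos hGa _) (Real.rpow_pos_of_pos hGb _)).ne', Real.log_exp,
    Real.log_mul (Real.rpow_pos_of_pos hGa _).ne' (Real.rpow_pos_of_pos hGb _).ne',
    Real.log_rpow (aux_Gs_pos d ε hε a), Real.log_rpow (aux_Gs_pos d ε hε b)] at hlog
  rw [hK] at hlog
  linarith

/-- the Hölder inequality, with endpoints allowed. -/
lemma aux_Gs_holder' (d : ℕ) (ε : ℝ) (hε : 0 < ε) (lam : ℝ) (h0 : 0 ≤ lam) (h1 : lam ≤ 1)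
    (a b : Fin d → ℝ) :
    Real.log (Gs d ε (fun i => (1 - lam) * a i + lam * b i)) ≤
      (1 - lam) * Real.log (Gs d ε a) + lam * Real.log (Gs d ε b) +
        lam * (1 - lam) * (∑ i, (a i - b i) ^ 2) / (2 * ε) := by
  rcases eq_or_lt_of_le h0 with h | h
  · have ha : (fun i => (1 - lam) * a i + lam * b i) = a := by
      funext i; rw [← h]; ring
    rw [ha, ← h]
    simp
  rcases eq_or_lt_of_le h1 with h' | h'
  · have hb : (fun i => (1 - lam) * a i + lam * b i) = b := by
      funext i; rw [h']; ring
    rw [hb, h']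
    simp
  exact aux_Gs_holder d ε hε lam h h' a b

lemma aux_lift_mem {d : ℕ} (x : Torus d) (i : Fin d) : lift x i ∈ Set.Ico (0:ℝ) (2 * π) := by
  have h := (AddCircle.equivIco (2 * Real.pi) 0 (x i)).2
  simpa [lift] using h

lemma aux_coe_lift {d : ℕ} (x : Torus d) (i : Fin d) :
    ((lift x i : ℝ) : AddCircle (2 * Real.pi)) = x i :=
  (AddCircle.equivIco (2 * Real.pi) 0).symm_apply_apply (x i)

lemma aux_exists_int_of_coe_eq {u v : ℝ}
    (h : (u : AddCircle (2 * Real.pi)) = (v : AddCircle (2 * Real.pi))) :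
    ∃ n : ℤ, u - v = 2 * π * n := by
  have h0 : ((u - v : ℝ) : AddCircle (2 * Real.pi)) = 0 := by
    rw [QuotientAddGroup.mk_sub, h, sub_self]
  rw [AddCircle.coe_eq_zero_iff] at h0
  obtain ⟨n, hn⟩ := h0
  exact ⟨n, by rw [← hn]; push_cast [zsmul_eq_mul]; ring⟩

lemma aux_coe_two_pi_int (n : ℤ) : ((2 * π * n : ℝ) : AddCircle (2 * Real.pi)) = 0 := by
  rw [AddCircle.coe_eq_zero_iff]
  exact ⟨n, by push_cast [zsmul_eq_mul]; ring⟩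

noncomputable def tfun {d : ℕ} (p q : Torus d) (k : Fin d → ℤ) : ℝ :=
  Real.sqrt (∑ i, (lift p i - lift q i - 2 * Real.pi * (k i)) ^ 2)

lemma aux_tdist_eq_iInf {d : ℕ} (p q : Torus d) : tdist p q = ⨅ k, tfun p q k := rfl

lemma aux_tdist_bddBelow {d : ℕ} (p q : Torus d) : BddBelow (Set.range (tfun p q)) := by
  refine ⟨0, ?_⟩
  rintro x ⟨k, rfl⟩
  exact Real.sqrt_nonneg _

lemma aux_tdist_nonneg {d : ℕ} (p q : Torus d) : 0 ≤ tdist p q :=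
  le_ciInf fun _ => Real.sqrt_nonneg _

/-- `tdist p q` is a lower bound for the norm of any lift of `p - q`. -/
lemma aux_tdist_le_of_lift {d : ℕ} (p q : Torus d) (t : Fin d → ℝ)
    (h : ∀ i, ((t i : ℝ) : AddCircle (2 * Real.pi)) = p i - q i) :
    tdist p q ≤ Real.sqrt (∑ i, t i ^ 2) := by
  have key : ∀ i, ∃ n : ℤ, t i - (lift p i - lift q i) = 2 * π * n := by
    intro i
    apply aux_exists_int_of_coe_eq
    rw [h i, QuotientAddGroup.mk_sub, aux_coe_lift, aux_coe_lift]
  choose n hn using key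
  have heq : Real.sqrt (∑ i, t i ^ 2) = tfun p q (fun j => -n j) := by
    rw [tfun]
    congr 1
    refine Finset.sum_congr rfl fun i _ => ?_
    have hb : t i = lift p i - lift q i - 2 * Real.pi * ((((fun j => -n j) i) : ℤ) : ℝ) := by
      push_cast
      linarith [hn i]
    rw [hb]
  rw [heq, aux_tdist_eq_iInf]
  exact ciInf_le (aux_tdist_bddBelow p q) _

lemma aux_clamp_sq_le (c : ℝ) (hc1 : -(2*π) < c) (hc2 : c < 2*π) (n : ℤ) :
    (c - 2*π*((max (-1) (min 1 n) : ℤ) : ℝ))^2 ≤ (c - 2*π*(n:ℝ))^2 := by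
  have hπ := Real.pi_pos
  rcases le_or_gt n (-2) with h | h
  · have hmax : max (-1:ℤ) (min 1 n) = -1 := by omega
    rw [hmax]
    have hn : (n:ℝ) ≤ -2 := by exact_mod_cast h
    push_cast
    have h4 : 4*π ≤ 2*π*(-(n:ℝ)) := by
      nlinarith [mul_nonneg hπ.le (show (0:ℝ) ≤ -(n:ℝ)-2 by linarith)]
    have he : c - 2*π*(-1:ℝ) = c + 2*π := by ring
    rw [he]
    exact pow_le_pow_left₀ (by linarith) (by linarith) 2
  · rcases le_or_gt 2 n with h' | h'
    · have hmax : max (-1:ℤ) (min 1 n) = 1 := by omega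
      rw [hmax]
      have hn : (2:ℝ) ≤ n := by exact_mod_cast h'
      push_cast
      have h4 : 4*π ≤ 2*π*(n:ℝ) := by
        nlinarith [mul_nonneg hπ.le (show (0:ℝ) ≤ (n:ℝ)-2 by linarith)]
      have he1 : (c - 2*π*(1:ℝ))^2 = (2*π - c)^2 := by ring
      have he2 : (c - 2*π*(n:ℝ))^2 = (2*π*(n:ℝ) - c)^2 := by ring
      rw [he1, he2]
      exact pow_le_pow_left₀ (by linarith) (by linarith) 2
    · have hmax : max (-1:ℤ) (min 1 n) = n := by omega
      rw [hmax]

/-- attainment of the infimum defining `tdist`. -/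
lemma aux_tdist_exists {d : ℕ} (p q : Torus d) :
    ∃ k₀ : Fin d → ℤ, tfun p q k₀ = tdist p q := by
  have hc : ∀ i, -(2*π) < lift p i - lift q i ∧ lift p i - lift q i < 2*π := by
    intro i
    obtain ⟨h1a, h1b⟩ := aux_lift_mem p i
    obtain ⟨h2a, h2b⟩ := aux_lift_mem q i
    constructor <;> [linarith; linarith]
  have hclamp : ∀ k : Fin d → ℤ, tfun p q (fun i => max (-1) (min 1 (k i))) ≤ tfun p q k := by
    intro k
    apply Real.sqrt_le_sqrt
    refine Finset.sum_le_sum fun i _ => ?_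
    exact aux_clamp_sq_le _ (hc i).1 (hc i).2 (k i)
  have hmem : ∀ k : Fin d → ℤ, (fun i => max (-1) (min 1 (k i))) ∈
      Fintype.piFinset (fun _ : Fin d => ({-1, 0, 1} : Finset ℤ)) := by
    intro k
    rw [Fintype.mem_piFinset]
    intro i
    simp only [Finset.mem_insert, Finset.mem_singleton]
    omega
  obtain ⟨k₀, hk₀mem, hk₀⟩ := Finset.exists_min_image
    (Fintype.piFinset (fun _ : Fin d => ({-1, 0, 1} : Finset ℤ))) (tfun p q)
    ⟨fun _ => 0, by rw [Fintype.mem_piFinset]; intro i; simp⟩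
  refine ⟨k₀, ?_⟩
  have hle : ∀ k, tfun p q k₀ ≤ tfun p q k := fun k => (hk₀ _ (hmem k)).trans (hclamp k)
  rw [aux_tdist_eq_iInf]
  exact le_antisymm (le_ciInf hle) (ciInf_le (aux_tdist_bddBelow p q) k₀)

lemma aux_geom (d : ℕ) (lam D : ℝ) (h0 : 0 ≤ lam) (h1 : lam ≤ 1) (r s : Fin d → ℝ)
    (hr : Real.sqrt (∑ i, r i ^ 2) = lam * D)
    (hs : Real.sqrt (∑ i, s i ^ 2) = (1 - lam) * D)
    (hD : D ≤ Real.sqrt (∑ i, (r i - s i) ^ 2)) :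
    (∑ i, (r i - s i) ^ 2) = D ^ 2 ∧ ∀ i, (1 - lam) * r i + lam * s i = 0 := by
  have nrm : ∀ t : Fin d → ℝ,
      ‖(WithLp.equiv 2 (Fin d → ℝ)).symm t‖ = Real.sqrt (∑ i, t i ^ 2) := by
    intro t
    rw [EuclideanSpace.norm_eq]
    congr 1
    exact Finset.sum_congr rfl fun i _ => by simp [WithLp.equiv_symm_apply]
  set R : EuclideanSpace ℝ (Fin d) := (WithLp.equiv 2 (Fin d → ℝ)).symm r with hR
  set S : EuclideanSpace ℝ (Fin d) := (WithLp.equiv 2 (Fin d → ℝ)).symm s with hS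
  have hRn : ‖R‖ = lam * D := by rw [hR, nrm]; exact hr
  have hSn : ‖S‖ = (1 - lam) * D := by rw [hS, nrm]; exact hs
  have hRS : R - S = (WithLp.equiv 2 (Fin d → ℝ)).symm (fun i => r i - s i) := rfl
  have hRSn : ‖R - S‖ = Real.sqrt (∑ i, (r i - s i) ^ 2) := by rw [hRS, nrm]
  have htri : ‖R - S‖ ≤ ‖R‖ + ‖S‖ := norm_sub_le R S
  have hRSD : ‖R - S‖ = D := by
    rw [hRn, hSn] at htri
    rw [hRSn]
    have := hD
    nlinarith [Real.sqrt_nonneg (∑ i, (r i - s i) ^ 2)]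
  have hDnn : 0 ≤ D := by
    have := norm_nonneg (R - S); rw [hRSD] at this; exact this
  have hsum : (∑ i, (r i - s i) ^ 2) = D ^ 2 := by
    have h := hRSn.symm.trans hRSD
    have hnn : 0 ≤ ∑ i, (r i - s i) ^ 2 :=
      Finset.sum_nonneg fun i _ => sq_nonneg _
    rw [← h, Real.sq_sqrt hnn]
  refine ⟨hsum, ?_⟩
  have e3 : ‖R - S‖ ^ 2 = D ^ 2 := by rw [hRSD]
  have e4 : (inner ℝ R S : ℝ) = -(lam * (1 - lam)) * D ^ 2 := by
    have hexp := norm_sub_sq_real R S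
    rw [hRn, hSn] at hexp
    nlinarith [hexp, e3]
  have hzero : ‖(1 - lam) • R + lam • S‖ ^ 2 = 0 := by
    rw [norm_add_sq_real, norm_smul, norm_smul, real_inner_smul_left, real_inner_smul_right,
      Real.norm_eq_abs, Real.norm_eq_abs, abs_of_nonneg (by linarith : (0:ℝ) ≤ 1 - lam),
      abs_of_nonneg h0, mul_pow, mul_pow, hRn, hSn, e4]
    ring
  have hv : (1 - lam) • R + lam • S = 0 := by
    have := pow_eq_zero_iff (n := 2) (by norm_num) |>.mp hzero
    exact norm_eq_zero.mp this
  intro i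
  have := congr_fun (congrArg (fun v : EuclideanSpace ℝ (Fin d) => (v : Fin d → ℝ)) hv) i
  simpa [hR, hS, WithLp.equiv_symm_apply] using this

end AuxStatement2

/-- for every `ε > 0` and `x ∈ 𝕋^d`, the map `y ↦ c_ε(x,y)` is
`1`-semiconcave on `𝕋^d`. -/
theorem statement2 (d : ℕ) (hd : 1 ≤ d) (ε : ℝ) (hε : 0 < ε) (x : Torus d)
    (lam : ℝ) (hlam0 : 0 ≤ lam) (hlam1 : lam ≤ 1) (y₁ y₂ z : Torus d)
    (hz1 : tdist z y₁ = lam * tdist y₁ y₂)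
    (hz2 : tdist z y₂ = (1 - lam) * tdist y₁ y₂) :
    cost ε x z ≥ (1 - lam) * cost ε x y₁ + lam * cost ε x y₂ -
      1 / 2 * (lam * (1 - lam) * tdist y₁ y₂ ^ 2) := by
  have hπ := Real.pi_pos
  set D := tdist y₁ y₂ with hDdef
  obtain ⟨k₁, hk₁⟩ := aux_tdist_exists z y₁
  obtain ⟨k₂, hk₂⟩ := aux_tdist_exists z y₂
  set r : Fin d → ℝ := fun i => lift z i - lift y₁ i - 2 * Real.pi * (k₁ i) with hrdef
  set s : Fin d → ℝ := fun i => lift z i - lift y₂ i - 2 * Real.pi * (k₂ i) with hsdef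
  have hrc : ∀ i, ((r i : ℝ) : AddCircle (2 * Real.pi)) = z i - y₁ i := by
    intro i
    show (((lift z i - lift y₁ i - 2 * Real.pi * (k₁ i) : ℝ)) : AddCircle (2 * Real.pi))
      = z i - y₁ i
    rw [QuotientAddGroup.mk_sub, QuotientAddGroup.mk_sub, aux_coe_lift, aux_coe_lift,
      aux_coe_two_pi_int, sub_zero]
  have hsc : ∀ i, ((s i : ℝ) : AddCircle (2 * Real.pi)) = z i - y₂ i := by
    intro i
    show (((lift z i - lift y₂ i - 2 * Real.pi * (k₂ i) : ℝ)) : AddCircle (2 * Real.pi))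
      = z i - y₂ i
    rw [QuotientAddGroup.mk_sub, QuotientAddGroup.mk_sub, aux_coe_lift, aux_coe_lift,
      aux_coe_two_pi_int, sub_zero]
  have hrn : Real.sqrt (∑ i, r i ^ 2) = lam * D := by
    have h1 : tfun z y₁ k₁ = Real.sqrt (∑ i, r i ^ 2) := rfl
    rw [← h1, hk₁, hz1]
  have hsn : Real.sqrt (∑ i, s i ^ 2) = (1 - lam) * D := by
    have h1 : tfun z y₂ k₂ = Real.sqrt (∑ i, s i ^ 2) := rfl
    rw [← h1, hk₂, hz2]
  have hDle : D ≤ Real.sqrt (∑ i, (r i - s i) ^ 2) := by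
    have hsr : ∀ i, (((s i - r i : ℝ)) : AddCircle (2 * Real.pi)) = y₁ i - y₂ i := by
      intro i
      rw [QuotientAddGroup.mk_sub, hrc i, hsc i]
      abel
    have h1 := aux_tdist_le_of_lift y₁ y₂ (fun i => s i - r i) hsr
    have h2 : (∑ i, (s i - r i) ^ 2) = ∑ i, (r i - s i) ^ 2 :=
      Finset.sum_congr rfl fun i _ => by ring
    rw [h2] at h1
    exact h1
  obtain ⟨hsum, hzero⟩ := aux_geom d lam D hlam0 hlam1 r s hrn hsn hDle
  set w : Fin d → ℝ := lift (x - z) with hwdef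
  set a : Fin d → ℝ := fun i => w i + r i with hadef
  set b : Fin d → ℝ := fun i => w i + s i with hbdef
  have hwc : ∀ i, ((w i : ℝ) : AddCircle (2 * Real.pi)) = x i - z i := by
    intro i
    have := aux_coe_lift (x - z) i
    rw [hwdef]
    exact this
  have hac : ∀ i, ((a i : ℝ) : AddCircle (2 * Real.pi)) = x i - y₁ i := by
    intro i
    show (((w i + r i : ℝ)) : AddCircle (2 * Real.pi)) = x i - y₁ i
    rw [QuotientAddGroup.mk_add, hwc i, hrc i]
    abel
  have hbc : ∀ i, ((b i : ℝ) : AddCircle (2 * Real.pi)) = x i - y₂ i := by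
    intro i
    show (((w i + s i : ℝ)) : AddCircle (2 * Real.pi)) = x i - y₂ i
    rw [QuotientAddGroup.mk_add, hwc i, hsc i]
    abel
  have hGa : Gs d ε (lift (x - y₁)) = Gs d ε a := by
    apply aux_Gs_congr
    intro i
    apply aux_exists_int_of_coe_eq
    rw [aux_coe_lift, hac i]
    rfl
  have hGb : Gs d ε (lift (x - y₂)) = Gs d ε b := by
    apply aux_Gs_congr
    intro i
    apply aux_exists_int_of_coe_eq
    rw [aux_coe_lift, hbc i]
    rfl
  have hab : ∀ i, (1 - lam) * a i + lam * b i = w i := by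
    intro i
    have h := hzero i
    show (1 - lam) * (w i + r i) + lam * (w i + s i) = w i
    have : (1 - lam) * (w i + r i) + lam * (w i + s i)
        = w i + ((1 - lam) * r i + lam * s i) := by ring
    rw [this, h, add_zero]
  have hfun : (fun i => (1 - lam) * a i + lam * b i) = w := funext fun i => hab i
  have habs : (∑ i, (a i - b i) ^ 2) = D ^ 2 := by
    rw [← hsum]
    exact Finset.sum_congr rfl fun i _ => by ring
  have key := aux_Gs_holder' d ε hε lam hlam0 hlam1 a b
  rw [hfun, habs, ← hGa, ← hGb] at key
  have hcost : ∀ y : Torus d, cost ε x y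
      = -(ε * (Real.log ((2 * Real.pi * ε) ^ (-(d:ℝ)/2))
        + Real.log (Gs d ε (lift (x - y))))) := by
    intro y
    have hC : (0:ℝ) < (2 * Real.pi * ε) ^ (-(d:ℝ)/2) :=
      Real.rpow_pos_of_pos (by positivity) _
    have hgker : gker ε (x - y) = (2 * Real.pi * ε) ^ (-(d:ℝ)/2) * Gs d ε (lift (x - y)) := rfl
    rw [cost, hgker, Real.log_mul hC.ne' (aux_Gs_pos d ε hε _).ne']
  have hwz : lift (x - z) = w := rfl
  rw [ge_iff_le, hcost z, hcost y₁, hcost y₂, hwz]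
  set L0 := Real.log ((2 * Real.pi * ε) ^ (-(d:ℝ)/2)) with hL0
  set Lz := Real.log (Gs d ε w) with hLz
  set L1 := Real.log (Gs d ε (lift (x - y₁))) with hL1
  set L2 := Real.log (Gs d ε (lift (x - y₂))) with hL2
  have key2 := mul_le_mul_of_nonneg_left key hε.le
  have hrhs : ε * ((1 - lam) * L1 + lam * L2 + lam * (1 - lam) * D ^ 2 / (2 * ε))
      = (1 - lam) * (ε * L1) + lam * (ε * L2) + lam * (1 - lam) * D ^ 2 / 2 := by
    field_simp
  rw [hrhs] at key2
  nlinarith [key2]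
end
end

section
/- Let μ be a probability measure on 𝕋^d, ε > 0, φ, χ : 𝕋^d → ℝ continuous, and y ∈ 𝕋^d. Then the function F : ℝ → ℝ defined by F(λ) = 𝒯_μ^ε[φ + λχ](y) is twice differentiable on ℝ, and for every λ ∈ ℝ one has F'(λ) = −∫ χ dπ_y[φ + λχ] and F''(λ) = −(1/ε)·Var_{π_y[φ+λχ]}(χ). -/
open MeasureTheory Real

noncomputable section

open Torus
namespace S4
variable {d : ℕ} {ε : ℝ}

lemma summable_pi_prod : ∀ {d : ℕ} (f : Fin d → ℤ → ℝ), (∀ i n, 0 ≤ f i n) →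
    (∀ i, Summable (f i)) → Summable (fun k : Fin d → ℤ => ∏ i, f i (k i)) := by
  intro d
  induction d with
  | zero => intro f _ _; exact Summable.of_finite
  | succ n ih =>
    intro f h0 hf
    have h1 : Summable (fun p : ℤ × (Fin n → ℤ) => f 0 p.1 * ∏ i : Fin n, f i.succ (p.2 i)) := by
      apply Summable.mul_of_nonneg (hf 0)
        (ih (fun i => f i.succ) (fun i m => h0 _ _) (fun i => hf _)) (fun m => h0 _ _)
      exact fun k => Finset.prod_nonneg fun i _ => h0 _ _
    have h2 := (Fin.consEquiv (fun _ : Fin (n+1) => ℤ)).summable_iff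
      (f := fun k : Fin (n+1) → ℤ => ∏ i, f i (k i))
    rw [← h2]
    refine h1.congr fun p => ?_
    simp [Fin.consEquiv, Fin.prod_univ_succ]

noncomputable def w (ε : ℝ) (n : ℤ) : ℝ :=
  Real.exp ((2*π)^2/(2*ε)) * Real.exp (-(2*π)^2/(2*ε)) ^ n.natAbs

lemma w_pos (n : ℤ) : 0 < w ε n := by unfold w; positivity

lemma summable_w (hε : 0 < ε) : Summable (w ε) := by
  have hr : Real.exp (-(2*π)^2/(2*ε)) < 1 := by
    rw [Real.exp_lt_one_iff]
    have h1 : (0:ℝ) < (2*π)^2/(2*ε) := by positivity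
    calc -(2*π)^2/(2*ε) = -((2*π)^2/(2*ε)) := by ring
      _ < 0 := by linarith
  have hr0 : (0:ℝ) ≤ Real.exp (-(2*π)^2/(2*ε)) := (Real.exp_pos _).le
  apply Summable.of_nat_of_neg
  · simpa [w] using (summable_geometric_of_lt_one hr0 hr).mul_left (Real.exp ((2*π)^2/(2*ε)))
  · simpa [w] using (summable_geometric_of_lt_one hr0 hr).mul_left (Real.exp ((2*π)^2/(2*ε)))

lemma term_le_w (hε : 0 < ε) {u : ℝ} (hu : u ∈ Set.Ico 0 (2*π)) (n : ℤ) :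
    Real.exp (-(u - 2*π*n)^2/(2*ε)) ≤ w ε n := by
  obtain ⟨hu0, hu2⟩ := hu
  have hπ := Real.pi_pos
  rw [w, ← Real.exp_nat_mul, ← Real.exp_add]
  apply Real.exp_le_exp.2
  have hrw : (2*π)^2/(2*ε) + (n.natAbs : ℝ) * (-(2*π)^2/(2*ε))
      = ((2*π)^2 + (n.natAbs:ℝ) * (-(2*π)^2))/(2*ε) := by ring
  rw [hrw, div_le_div_iff_of_pos_right (by positivity)]
  rcases eq_or_ne n 0 with rfl | hn
  · simp; nlinarith [sq_nonneg u]
  · obtain ⟨p, hp⟩ : ∃ p : ℕ, n.natAbs = p + 1 := ⟨n.natAbs - 1, by omega⟩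
    have habs : |2*π*n| = 2*π*(p+1 : ℝ) := by
      rw [abs_mul, abs_of_pos (by positivity : (0:ℝ) < 2*π)]
      rw [← Int.cast_abs, Int.abs_eq_natAbs, hp]
      push_cast; ring
    have h1 : 2*π*(p:ℝ) ≤ |u - 2*π*n| := by
      have h := abs_sub_abs_le_abs_sub (2*π*(n:ℝ)) u
      rw [habs, abs_of_nonneg hu0] at h
      calc 2*π*(p:ℝ) ≤ 2*π*(p+1:ℝ) - u := by nlinarith
        _ ≤ |2*π*(n:ℝ) - u| := h
        _ = |u - 2*π*n| := abs_sub_comm _ _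
    have h2 : (2*π*(p:ℝ))^2 ≤ (u - 2*π*n)^2 := by
      calc (2*π*(p:ℝ))^2 ≤ |u - 2*π*n|^2 := by
            apply pow_le_pow_left₀ (by positivity) h1
        _ = (u - 2*π*n)^2 := sq_abs _
    have hpp : (p:ℝ) ≤ (p:ℝ)^2 := by
      have := Nat.le_self_pow (two_ne_zero) p
      exact_mod_cast this
    rw [hp]; push_cast
    nlinarith

lemma lift_mem (x : Torus d) (i : Fin d) : lift x i ∈ Set.Ico (0:ℝ) (2*π) := by
  have := (AddCircle.equivIco (2 * Real.pi) 0 (x i)).2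
  exact ⟨this.1, lt_of_lt_of_eq this.2 (zero_add _)⟩

lemma exp_sum_eq (v : Fin d → ℝ) (k : Fin d → ℤ) :
    Real.exp (-(∑ i, (v i - 2*π*(k i))^2)/(2*ε)) =
      ∏ i, Real.exp (-(v i - 2*π*(k i))^2/(2*ε)) := by
  rw [← Real.exp_sum]
  congr 1
  rw [← Finset.sum_div, ← Finset.sum_neg_distrib]

lemma gauss_le_w (hε : 0 < ε) (v : Fin d → ℝ) (hv : ∀ i, v i ∈ Set.Ico 0 (2*π))
    (k : Fin d → ℤ) :
    Real.exp (-(∑ i, (v i - 2*π*(k i))^2)/(2*ε)) ≤ ∏ i, w ε (k i) := by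
  rw [exp_sum_eq]
  exact Finset.prod_le_prod (fun i _ => (Real.exp_pos _).le)
    (fun i _ => term_le_w hε (hv i) (k i))

lemma summable_gauss (hε : 0 < ε) (v : Fin d → ℝ) (hv : ∀ i, v i ∈ Set.Ico 0 (2*π)) :
    Summable (fun k : Fin d → ℤ => Real.exp (-(∑ i, (v i - 2*π*(k i))^2)/(2*ε))) := by
  apply Summable.of_norm_bounded (summable_pi_prod (fun _ => w ε)
    (fun _ n => (w_pos n).le) (fun _ => summable_w hε))
  intro k
  rw [Real.norm_eq_abs, abs_of_pos (Real.exp_pos _)]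
  exact gauss_le_w hε v hv k

noncomputable def W (d : ℕ) (ε : ℝ) : ℝ := ∑' k : Fin d → ℤ, ∏ i, w ε (k i)

lemma gker_le (hε : 0 < ε) (x : Torus d) :
    gker ε x ≤ (2 * π * ε) ^ (-(d : ℝ) / 2) * W d ε := by
  apply mul_le_mul_of_nonneg_left _ (Real.rpow_nonneg (by positivity) _)
  exact Summable.tsum_le_tsum (gauss_le_w hε _ (lift_mem x))
    (summable_gauss hε _ (lift_mem x))
    (summable_pi_prod (fun _ => w ε) (fun _ n => (w_pos n).le) (fun _ => summable_w hε))

lemma gker_lb (hε : 0 < ε) (x : Torus d) :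
    (2 * π * ε) ^ (-(d : ℝ) / 2) * Real.exp (-(d * (2*π)^2)/(2*ε)) ≤ gker ε x := by
  have hpref : (0:ℝ) < (2 * π * ε) ^ (-(d : ℝ) / 2) :=
    Real.rpow_pos_of_pos (by positivity) _
  apply mul_le_mul_of_nonneg_left _ hpref.le
  have h0 : Real.exp (-(∑ i, (lift x i - 2*π*((0 : Fin d → ℤ) i))^2)/(2*ε)) ≤
      ∑' k : Fin d → ℤ, Real.exp (-(∑ i, (lift x i - 2*π*(k i))^2)/(2*ε)) :=
    Summable.le_tsum (summable_gauss hε _ (lift_mem x)) 0 (fun k _ => (Real.exp_pos _).le)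
  refine le_trans ?_ h0
  apply Real.exp_le_exp.2
  apply div_le_div_of_nonneg_right ?_ (by positivity)
  rw [neg_le_neg_iff]
  calc ∑ i, (lift x i - 2*π*((0 : Fin d → ℤ) i))^2 ≤ ∑ _i : Fin d, (2*π)^2 := by
        apply Finset.sum_le_sum
        intro i _
        have h := lift_mem x i
        have hπ := Real.pi_pos
        simp only [Pi.zero_apply, Int.cast_zero, mul_zero, sub_zero]
        nlinarith [h.1, h.2]
    _ = d * (2*π)^2 := by simp [Finset.sum_const, mul_comm]

lemma gker_pos (hε : 0 < ε) (x : Torus d) : 0 < gker ε x :=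
  lt_of_lt_of_le (by positivity) (gker_lb hε x)

lemma measurable_lift (i : Fin d) : Measurable (fun x : Torus d => lift x i) := by
  have h1 : Measurable (fun z : AddCircle (2*π) => (AddCircle.equivIco (2*π) 0 z : ℝ)) := by
    have := (AddCircle.measurableEquivIco (T := 2*π) 0).measurable
    exact measurable_subtype_coe.comp this
  exact h1.comp (measurable_pi_apply i)

lemma measurable_gker (hε : 0 < ε) : Measurable (fun x : Torus d => gker ε x) := by
  have hterm : ∀ k : Fin d → ℤ, Measurable (fun x : Torus d =>
      Real.exp (-(∑ i, (lift x i - 2*π*(k i))^2)/(2*ε))) := by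
    intro k
    apply Real.measurable_exp.comp
    apply Measurable.div_const
    apply Measurable.neg
    exact Finset.measurable_sum _ (fun i _ => ((measurable_lift i).sub_const _).pow_const 2)
  have key : ∀ x : Torus d, (∑' k : Fin d → ℤ,
      Real.exp (-(∑ i, (lift x i - 2*π*(k i))^2)/(2*ε))) =
      (∑' k : Fin d → ℤ,
        ENNReal.ofReal (Real.exp (-(∑ i, (lift x i - 2*π*(k i))^2)/(2*ε)))).toReal := by
    intro x
    rw [← ENNReal.ofReal_tsum_of_nonneg (fun k => (Real.exp_pos _).le)
      (summable_gauss hε _ (lift_mem x)), ENNReal.toReal_ofReal]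
    exact tsum_nonneg fun k => (Real.exp_pos _).le
  unfold gker
  simp_rw [key]
  apply Measurable.const_mul
  apply ENNReal.measurable_toReal.comp
  exact Measurable.ennreal_tsum fun k => ENNReal.measurable_ofReal.comp (hterm k)

lemma exp_shift (hε : 0 < ε) (f : Torus d → ℝ) (x y : Torus d) :
    Real.exp ((f x - cost ε x y)/ε) = Real.exp (f x / ε) * gker ε (x - y) := by
  have hg := gker_pos hε (x - y)
  rw [show (f x - cost ε x y)/ε = f x/ε + Real.log (gker ε (x-y)) by
    rw [cost]; field_simp; ring]
  rw [Real.exp_add, Real.exp_log hg]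

end S4

/-- the map `F(λ) = 𝒯_μ^ε[φ + λχ](y)` is twice differentiable, with
`F'(λ) = -∫ χ dπ_y[φ + λχ]` and `F''(λ) = -(1/ε)·Var_{π_y[φ+λχ]}(χ)`. -/
theorem statement4 (d : ℕ) (hd : 1 ≤ d) (ε : ℝ) (hε : 0 < ε)
    (μ : Measure (Torus d)) (hμ : IsProbabilityMeasure μ)
    (φ χ : Torus d → ℝ) (hφ : Continuous φ) (hχ : Continuous χ) (y : Torus d) :
    ∀ lam : ℝ,
      HasDerivAt (fun s : ℝ => Tmap ε μ (fun x => φ x + s * χ x) y)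
        (-(∫ x, χ x ∂(piY ε μ (fun x => φ x + lam * χ x) y))) lam ∧
      HasDerivAt (fun s : ℝ => -(∫ x, χ x ∂(piY ε μ (fun x => φ x + s * χ x) y)))
        (-(1 / ε) * Var (piY ε μ (fun x => φ x + lam * χ x) y) χ) lam := by
  intro lam
  haveI := hμ
  obtain ⟨x₁, -, hCφ⟩ := isCompact_univ.exists_isMaxOn (Set.univ_nonempty)
    (continuous_abs.comp hφ).continuousOn
  obtain ⟨x₂, -, hCχ⟩ := isCompact_univ.exists_isMaxOn (Set.univ_nonempty)
    (continuous_abs.comp hχ).continuousOn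
  set Cφ := |φ x₁| with hCφdef
  set Cχ := |χ x₂| with hCχdef
  have hCφ : ∀ x, |φ x| ≤ Cφ := fun x => hCφ (Set.mem_univ x)
  have hCχ : ∀ x, |χ x| ≤ Cχ := fun x => hCχ (Set.mem_univ x)
  have hCχ0 : 0 ≤ Cχ := abs_nonneg _
  set M := (2 * π * ε) ^ (-(d : ℝ) / 2) * S4.W d ε with hMdef
  have hFM : ∀ x : Torus d, gker ε x ≤ M := S4.gker_le hε
  set mlb := (2 * π * ε) ^ (-(d : ℝ) / 2) * Real.exp (-(d * (2*π)^2)/(2*ε)) with hmlbdef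
  have hmlb0 : 0 < mlb := by
    have hπ := Real.pi_pos
    have : (0:ℝ) < (2 * π * ε) ^ (-(d : ℝ) / 2) := Real.rpow_pos_of_pos (by positivity) _
    positivity
  have hglb : ∀ x : Torus d, mlb ≤ gker ε x := S4.gker_lb hε
  have hM0 : 0 < M := lt_of_lt_of_le hmlb0 ((hglb 0).trans (hFM 0))
  set F : ℝ → Torus d → ℝ := fun s x => Real.exp ((φ x + s * χ x - cost ε x y)/ε) with hFdef
  have hFeq : ∀ s x, F s x = Real.exp ((φ x + s * χ x)/ε) * gker ε (x - y) :=
    fun s x => S4.exp_shift hε (fun x => φ x + s * χ x) x y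
  have hFpos : ∀ s x, 0 < F s x := fun s x => Real.exp_pos _
  set Bs : ℝ → ℝ := fun s => Cφ + |s| * Cχ with hBsdef
  have habs : ∀ (s : ℝ) (x : Torus d), |φ x + s * χ x| ≤ Bs s := by
    intro s x
    have h1 := hCφ x
    have h2 := hCχ x
    have h3 : |s * χ x| = |s| * |χ x| := abs_mul _ _
    have h4 : |s| * |χ x| ≤ |s| * Cχ := mul_le_mul_of_nonneg_left h2 (abs_nonneg s)
    calc |φ x + s * χ x| ≤ |φ x| + |s * χ x| := abs_add_le _ _
      _ ≤ Cφ + |s| * Cχ := by rw [h3]; exact add_le_add h1 h4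
  have hFle : ∀ s x, F s x ≤ Real.exp (Bs s / ε) * M := by
    intro s x
    rw [hFeq]
    apply mul_le_mul _ (hFM _) (le_of_lt (S4.gker_pos hε _)) (Real.exp_pos _).le
    apply Real.exp_le_exp.2
    apply div_le_div_of_nonneg_right ?_ hε.le
    exact le_trans (le_abs_self _) (habs s x)
  have hFlb : ∀ s x, Real.exp (-(Bs s) / ε) * mlb ≤ F s x := by
    intro s x
    rw [hFeq]
    apply mul_le_mul _ (hglb _) hmlb0.le (Real.exp_pos _).le
    apply Real.exp_le_exp.2
    apply div_le_div_of_nonneg_right ?_ hε.le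
    exact neg_le_of_abs_le (habs s x)
  have hFmeas : ∀ s, Measurable (F s) := by
    intro s
    have : F s = fun x => Real.exp ((φ x + s * χ x)/ε) * gker ε (x - y) := funext (hFeq s)
    rw [this]
    exact ((Real.continuous_exp.comp (((hφ.add (continuous_const.mul hχ))).div_const ε)).measurable).mul
      ((S4.measurable_gker hε).comp (continuous_id.sub continuous_const).measurable)
  have hIg : ∀ (g : Torus d → ℝ) (Cg : ℝ), Measurable g → (∀ x, |g x| ≤ Cg) → ∀ s,
      Integrable (fun x => g x * F s x) μ := by
    intro g Cg hgm hgb s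
    refine ⟨(hgm.mul (hFmeas s)).aestronglyMeasurable, ?_⟩
    apply HasFiniteIntegral.of_bounded (C := Cg * (Real.exp (Bs s / ε) * M))
    apply ae_of_all
    intro x
    calc ‖g x * F s x‖ = |g x| * F s x := by
          rw [norm_mul, Real.norm_eq_abs, Real.norm_eq_abs, abs_of_pos (hFpos s x)]
      _ ≤ Cg * (Real.exp (Bs s / ε) * M) :=
          mul_le_mul (hgb x) (hFle s x) (hFpos s x).le ((abs_nonneg _).trans (hgb x))
  have hIF : ∀ s, Integrable (F s) μ := by
    intro s
    have := hIg (fun _ => (1:ℝ)) 1 measurable_const (fun x => by norm_num) s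
    simpa using this
  have hIχF : ∀ s, Integrable (fun x => χ x * F s x) μ := hIg χ Cχ hχ.measurable hCχ
  have hIχ2F : ∀ s, Integrable (fun x => χ x ^ 2 * F s x) μ := by
    apply hIg (fun x => χ x ^ 2) (Cχ ^ 2) (hχ.measurable.pow_const 2)
    intro x
    rw [abs_pow]
    exact pow_le_pow_left₀ (abs_nonneg _) (hCχ x) 2
  set Z : ℝ → ℝ := fun s => ∫ x, F s x ∂μ with hZdef
  set A : ℝ → ℝ := fun s => ∫ x, χ x * F s x ∂μ with hAdef
  have hZpos : ∀ s, 0 < Z s := by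
    intro s
    have h := integral_mono (μ := μ) (integrable_const (Real.exp (-(Bs s) / ε) * mlb))
      (hIF s) (fun x => hFlb s x)
    rw [integral_const] at h
    simp only [probReal_univ, ENNReal.toReal_one, one_smul] at h
    exact lt_of_lt_of_le (by positivity) h
  have hderiv : ∀ (s : ℝ) (x : Torus d), HasDerivAt (fun t => F t x) (F s x * (χ x / ε)) s := by
    intro s x
    have hu : HasDerivAt (fun t : ℝ => (φ x + t * χ x - cost ε x y)/ε) (χ x / ε) s := by
      have h1 : HasDerivAt (fun t : ℝ => φ x + t * χ x - cost ε x y) (χ x) s := by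
        simpa using (((hasDerivAt_id s).mul_const (χ x)).const_add (φ x)).sub_const (cost ε x y)
      simpa using h1.div_const ε
    simpa using hu.exp
  have hballB : ∀ s ∈ Metric.ball lam 1, Bs s ≤ Bs lam + Cχ := by
    intro s hs
    rw [Metric.mem_ball, Real.dist_eq] at hs
    have h1 : |s| ≤ |lam| + 1 := by
      have h2 := abs_sub_abs_le_abs_sub s lam
      linarith
    simp only [hBsdef]
    nlinarith
  have hballF : ∀ s ∈ Metric.ball lam 1, ∀ x : Torus d,
      F s x ≤ Real.exp ((Bs lam + Cχ)/ε) * M := by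
    intro s hs x
    refine (hFle s x).trans ?_
    apply mul_le_mul_of_nonneg_right _ hM0.le
    exact Real.exp_le_exp.2 (div_le_div_of_nonneg_right (hballB s hs) hε.le)
  -- derivative of Z
  have hZd := hasDerivAt_integral_of_dominated_loc_of_deriv_le (μ := μ) (F := F)
    (F' := fun s x => F s x * (χ x / ε)) (x₀ := lam)
    (bound := fun _ => Real.exp ((Bs lam + Cχ)/ε) * M * (Cχ / ε))
    (Metric.ball_mem_nhds lam one_pos)
    (Filter.Eventually.of_forall fun s => (hFmeas s).aestronglyMeasurable)
    (hIF lam)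
    (((hFmeas lam).mul (hχ.measurable.div_const ε)).aestronglyMeasurable)
    (ae_of_all _ fun x s hs => by
      calc ‖F s x * (χ x / ε)‖ = F s x * (|χ x| / ε) := by
            rw [norm_mul, Real.norm_eq_abs, Real.norm_eq_abs, abs_of_pos (hFpos s x),
              abs_div, abs_of_pos hε]
        _ ≤ Real.exp ((Bs lam + Cχ)/ε) * M * (Cχ / ε) :=
            mul_le_mul (hballF s hs x) (div_le_div_of_nonneg_right (hCχ x) hε.le)
              (by positivity) (by positivity))
    (integrable_const _)
    (ae_of_all _ fun x s _ => hderiv s x)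
  -- derivative of A
  have hAd := hasDerivAt_integral_of_dominated_loc_of_deriv_le (μ := μ)
    (F := fun s x => χ x * F s x)
    (F' := fun s x => χ x * (F s x * (χ x / ε))) (x₀ := lam)
    (bound := fun _ => Cχ * (Real.exp ((Bs lam + Cχ)/ε) * M * (Cχ / ε)))
    (Metric.ball_mem_nhds lam one_pos)
    (Filter.Eventually.of_forall fun s => (hχ.measurable.mul (hFmeas s)).aestronglyMeasurable)
    (hIχF lam)
    ((hχ.measurable.mul ((hFmeas lam).mul (hχ.measurable.div_const ε))).aestronglyMeasurable)
    (ae_of_all _ fun x s hs => by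
      calc ‖χ x * (F s x * (χ x / ε))‖ = |χ x| * (F s x * (|χ x| / ε)) := by
            rw [norm_mul, norm_mul, Real.norm_eq_abs, Real.norm_eq_abs, Real.norm_eq_abs,
              abs_of_pos (hFpos s x), abs_div, abs_of_pos hε]
        _ ≤ Cχ * (Real.exp ((Bs lam + Cχ)/ε) * M * (Cχ / ε)) := by
            apply mul_le_mul (hCχ x) _ (by positivity) hCχ0
            calc F s x * (|χ x| / ε) ≤ (Real.exp ((Bs lam + Cχ)/ε) * M) * (Cχ / ε) :=
                  mul_le_mul (hballF s hs x) (div_le_div_of_nonneg_right (hCχ x) hε.le)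
                    (by positivity) (by positivity)
              _ = Real.exp ((Bs lam + Cχ)/ε) * M * (Cχ / ε) := by ring)
    (integrable_const _)
    (ae_of_all _ fun x s _ => (hderiv s x).const_mul (χ x))
  set Bq : ℝ := ∫ x, χ x ^ 2 * F lam x ∂μ with hBqdef
  have hZ'val : (∫ x, F lam x * (χ x / ε) ∂μ) = A lam / ε := by
    rw [hAdef]
    simp only
    rw [← integral_div]
    congr 1
    funext x
    ring
  have hA'val : (∫ x, χ x * (F lam x * (χ x / ε)) ∂μ) = Bq / ε := by
    rw [hBqdef]
    rw [← integral_div]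
    congr 1
    funext x
    ring
  have hZderiv : HasDerivAt Z (A lam / ε) lam := hZ'val ▸ hZd.2
  have hAderiv : HasDerivAt A (Bq / ε) lam := hA'val ▸ hAd.2
  -- integral against piY
  have hπ : ∀ (s : ℝ) (g : Torus d → ℝ), Measurable g →
      (∫ x, g x ∂(piY ε μ (fun x => φ x + s * χ x) y)) = (∫ x, g x * F s x ∂μ) / Z s := by
    intro s g hg
    have hdens : piY ε μ (fun x => φ x + s * χ x) y
        = μ.withDensity (fun x => ((fun x' => Real.toNNReal (F s x' / Z s)) x : ENNReal)) := rfl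
    rw [hdens, integral_withDensity_eq_integral_smul
      (((hFmeas s).div_const _).real_toNNReal) g]
    have hcoe : ∀ x : Torus d, (F s x / Z s).toNNReal • g x = (g x * F s x) / Z s := by
      intro x
      rw [NNReal.smul_def, Real.coe_toNNReal _ (div_nonneg (hFpos s x).le (hZpos s).le),
        smul_eq_mul]
      ring
    simp_rw [hcoe]
    rw [integral_div]
  constructor
  · have h2 : HasDerivAt (fun s => Real.log (Z s)) ((A lam / ε) / Z lam) lam :=
      hZderiv.log (hZpos lam).ne'
    have h3 : HasDerivAt (fun s => -(ε * Real.log (Z s))) (-(ε * ((A lam / ε) / Z lam))) lam :=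
      (h2.const_mul ε).neg
    have hval : -(ε * ((A lam / ε) / Z lam))
        = -(∫ x, χ x ∂(piY ε μ (fun x => φ x + lam * χ x) y)) := by
      rw [hπ lam χ hχ.measurable]
      show -(ε * ((A lam / ε) / Z lam)) = -(A lam / Z lam)
      congr 1
      rw [div_div, mul_div_assoc', mul_div_mul_left _ _ hε.ne']
    rw [← hval]
    exact h3
  · have hfun : (fun s : ℝ => -(∫ x, χ x ∂(piY ε μ (fun x => φ x + s * χ x) y)))
        = fun s => -(A s / Z s) := by
      funext s
      rw [hπ s χ hχ.measurable]
    rw [hfun]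
    have hD : HasDerivAt (fun s => -(A s / Z s))
        (-((Bq / ε * Z lam - A lam * (A lam / ε)) / Z lam ^ 2)) lam :=
      (hAderiv.div hZderiv (hZpos lam).ne').neg
    convert hD using 1
    have hmean : (∫ x, χ x ∂(piY ε μ (fun x => φ x + lam * χ x) y)) = A lam / Z lam :=
      hπ lam χ hχ.measurable
    have hVar : Var (piY ε μ (fun x => φ x + lam * χ x) y) χ
        = Bq / Z lam - (A lam / Z lam) ^ 2 := by
      show (∫ x, (χ x - ∫ x', χ x' ∂(piY ε μ (fun x => φ x + lam * χ x) y)) ^ 2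
        ∂(piY ε μ (fun x => φ x + lam * χ x) y)) = _
      rw [hmean]
      rw [hπ lam (fun x => (χ x - A lam / Z lam) ^ 2)
        ((hχ.measurable.sub_const _).pow_const 2)]
      have hexp : ∀ x : Torus d, (χ x - A lam / Z lam) ^ 2 * F lam x
          = χ x ^ 2 * F lam x - (2 * (A lam / Z lam)) * (χ x * F lam x)
            + (A lam / Z lam) ^ 2 * F lam x := fun x => by ring
      simp_rw [hexp]
      have i1 : Integrable (fun x : Torus d =>
          χ x ^ 2 * F lam x - 2 * (A lam / Z lam) * (χ x * F lam x)) μ :=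
        (hIχ2F lam).sub ((hIχF lam).const_mul (2 * (A lam / Z lam)))
      have i2 : Integrable (fun x : Torus d => (A lam / Z lam) ^ 2 * F lam x) μ :=
        (hIF lam).const_mul _
      have i3 : Integrable (fun x : Torus d =>
          2 * (A lam / Z lam) * (χ x * F lam x)) μ :=
        (hIχF lam).const_mul _
      rw [integral_add i1 i2, integral_sub (hIχ2F lam) i3,
        integral_const_mul, integral_const_mul]
      have hZne := (hZpos lam).ne'
      have e1 : (∫ a : Torus d, χ a * F lam a ∂μ) = A lam := rfl
      have e2 : (∫ a : Torus d, F lam a ∂μ) = Z lam := rfl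
      rw [e1, e2]
      field_simp
      ring
    rw [hVar]
    have hZne := (hZpos lam).ne'
    field_simp
end
end

section
/- Let ρ be a probability measure on 𝕋^d whose density satisfies 0 < m ≤ ρ(x) ≤ M < ∞ for all x ∈ 𝕋^d. Then for every r₀ > 0 there exist a finite family 𝓕 of open metric balls of radii less than r₀ whose union is 𝕋^d, and constants A ≥ 1 and κ > 0 depending only on d, m, M, r₀, such that: (i) for every x ∈ 𝕋^d, the number of balls B(x_Q, r_Q) ∈ 𝓕 such that x ∈ B(x_Q, 2r_Q) is at most A; and (ii) for every continuous f : 𝕋^d → ℝ, Var_ρ(f) ≤ κ·Σ_{Q∈𝓕} ρ(Q)·Var_{ρ_Q}(f). -/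
open MeasureTheory Real

noncomputable section

open Torus
namespace S9
open Torus
variable {d : ℕ}

lemma lift_mem_Ico (x : Torus d) (i : Fin d) : lift x i ∈ Set.Ico (0:ℝ) (2 * Real.pi) := by
  have h := (AddCircle.equivIco (2 * Real.pi) 0 (x i)).2
  simpa [lift] using h

lemma coe_lift (x : Torus d) (i : Fin d) :
    ((lift x i : ℝ) : AddCircle (2 * Real.pi)) = x i :=
  (AddCircle.equivIco _ 0).symm_apply_apply (x i)

lemma lift_coe {v : ℝ} (hv : v ∈ Set.Ico (0:ℝ) (2 * Real.pi)) :
    (AddCircle.equivIco (2 * Real.pi) 0 ((v : ℝ) : AddCircle (2 * Real.pi)) : ℝ) = v := by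
  rw [AddCircle.coe_equivIco_mk_apply]
  rw [Int.fract_eq_self.mpr ⟨div_nonneg hv.1 (by positivity),
    by rw [div_lt_one (by positivity)]; exact hv.2⟩]
  field_simp

lemma tdist_le (x y : Torus d) (k : Fin d → ℤ) :
    tdist x y ≤ Real.sqrt (∑ i, (lift x i - lift y i - 2 * Real.pi * (k i)) ^ 2) :=
  ciInf_le ⟨0, by rintro _ ⟨k, rfl⟩; positivity⟩ k

lemma tdist_nonneg (x y : Torus d) : 0 ≤ tdist x y :=
  le_ciInf fun _ => Real.sqrt_nonneg _

lemma tdist_self (x : Torus d) : tdist x x = 0 := by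
  refine le_antisymm ?_ (tdist_nonneg x x)
  have h := tdist_le x x 0
  simpa using h

lemma sqrt_sum_sq_add_le (a b : Fin d → ℝ) :
    Real.sqrt (∑ i, (a i + b i)^2) ≤
      Real.sqrt (∑ i, (a i)^2) + Real.sqrt (∑ i, (b i)^2) := by
  have key : ∀ v : Fin d → ℝ,
      Real.sqrt (∑ i, (v i)^2) = ‖(WithLp.equiv 2 (Fin d → ℝ)).symm v‖ := by
    intro v
    rw [EuclideanSpace.norm_eq]
    congr 1
    refine Finset.sum_congr rfl fun i _ => ?_
    simp [Real.norm_eq_abs, sq_abs]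

  have h2 : Real.sqrt (∑ i, (a i + b i)^2)
      = ‖(WithLp.equiv 2 (Fin d → ℝ)).symm a + (WithLp.equiv 2 (Fin d → ℝ)).symm b‖ := by
    rw [EuclideanSpace.norm_eq]
    congr 1
    refine Finset.sum_congr rfl fun i _ => ?_
    simp [Real.norm_eq_abs, sq_abs, PiLp.add_apply]
  rw [h2, key, key]
  exact norm_add_le _ _

lemma tdist_triangle (x y z : Torus d) : tdist x z ≤ tdist x y + tdist y z := by
  have H : ∀ (k k' : Fin d → ℤ), tdist x z ≤
      Real.sqrt (∑ i, (lift x i - lift y i - 2 * Real.pi * (k i)) ^ 2)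
      + Real.sqrt (∑ i, (lift y i - lift z i - 2 * Real.pi * (k' i)) ^ 2) := by
    intro k k'
    refine (tdist_le x z (k + k')).trans ?_
    have he : ∀ i, lift x i - lift z i - 2 * Real.pi * ((k + k') i)
        = (lift x i - lift y i - 2 * Real.pi * (k i))
          + (lift y i - lift z i - 2 * Real.pi * (k' i)) := by
      intro i
      simp only [Pi.add_apply, Int.cast_add]
      ring
    calc Real.sqrt (∑ i, (lift x i - lift z i - 2 * Real.pi * ((k + k') i)) ^ 2)
        = Real.sqrt (∑ i, ((lift x i - lift y i - 2 * Real.pi * (k i))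
          + (lift y i - lift z i - 2 * Real.pi * (k' i))) ^ 2) := by
          congr 1; exact Finset.sum_congr rfl fun i _ => by rw [he i]
      _ ≤ _ := sqrt_sum_sq_add_le _ _
  have h1 : ∀ k : Fin d → ℤ, tdist x z - tdist y z ≤
      Real.sqrt (∑ i, (lift x i - lift y i - 2 * Real.pi * (k i)) ^ 2) := by
    intro k
    have h2 : tdist x z - Real.sqrt (∑ i, (lift x i - lift y i - 2 * Real.pi * (k i)) ^ 2)
        ≤ tdist y z := le_ciInf fun k' => by have := H k k'; linarith
    linarith
  have h3 : tdist x z - tdist y z ≤ tdist x y := le_ciInf h1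
  linarith

lemma tdist_symm (x y : Torus d) : tdist x y = tdist y x := by
  have key : ∀ u v : Torus d, tdist u v ≤ tdist v u := by
    intro u v
    refine le_ciInf fun k => ?_
    have h := tdist_le u v (-k)
    refine h.trans (le_of_eq ?_)
    congr 1
    refine Finset.sum_congr rfl fun i _ => ?_
    have : lift u i - lift v i - 2 * Real.pi * ((-k) i)
        = -(lift v i - lift u i - 2 * Real.pi * (k i)) := by
      simp only [Pi.neg_apply, Int.cast_neg]; ring
    rw [this, neg_pow_two]
  exact le_antisymm (key x y) (key y x)

lemma tdist_le_sqrt_dist (x y : Torus d) :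
    tdist x y ≤ Real.sqrt (∑ i, dist (x i) (y i) ^ 2) := by
  set w : Fin d → ℝ := fun i => lift x i - lift y i with hw
  set k : Fin d → ℤ := fun i => round ((2 * Real.pi)⁻¹ * w i) with hk
  have hdist : ∀ i, dist (x i) (y i) ^ 2 = (lift x i - lift y i - 2 * Real.pi * (k i)) ^ 2 := by
    intro i
    have h1 : x i - y i = ((w i : ℝ) : AddCircle (2 * Real.pi)) := by
      rw [← coe_lift x i, ← coe_lift y i]
      norm_cast
    rw [dist_eq_norm, h1, AddCircle.norm_eq, sq_abs]
    simp only [hk]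
    ring
  calc tdist x y ≤ Real.sqrt (∑ i, (lift x i - lift y i - 2 * Real.pi * (k i)) ^ 2) :=
        tdist_le x y k
    _ = Real.sqrt (∑ i, dist (x i) (y i) ^ 2) := by
        congr 1; exact Finset.sum_congr rfl fun i _ => (hdist i).symm


/-- grid point -/
noncomputable def gp {d : ℕ} (N : ℕ) (j : Fin d → Fin N) : Torus d :=
  fun i => ((2 * Real.pi * (j i : ℝ) / N : ℝ) : AddCircle (2 * Real.pi))

lemma lift_gp {N : ℕ} (hN : 0 < N) (j : Fin d → Fin N) (i : Fin d) :
    lift (gp N j) i = 2 * Real.pi * (j i : ℝ) / N := by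
  have hNR : (0:ℝ) < N := by exact_mod_cast hN
  have hmem : (2 * Real.pi * (j i : ℝ) / N) ∈ Set.Ico (0:ℝ) (2 * Real.pi) := by
    constructor
    · positivity
    · rw [div_lt_iff₀ hNR]
      have : ((j i : ℝ)) < N := by exact_mod_cast (j i).2
      nlinarith [Real.pi_pos]
  exact lift_coe hmem

lemma sqrt_sum_le {c : ℝ} (hc : 0 ≤ c) (v : Fin d → ℝ) (hv : ∀ i, v i ^ 2 ≤ c ^ 2) :
    Real.sqrt (∑ i, v i ^ 2) ≤ Real.sqrt d * c := by
  have h1 : (∑ i, v i ^ 2) ≤ (d : ℝ) * c ^ 2 := by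
    calc (∑ i, v i ^ 2) ≤ ∑ _i : Fin d, c ^ 2 := Finset.sum_le_sum fun i _ => hv i
      _ = (d : ℝ) * c ^ 2 := by simp [Finset.sum_const, nsmul_eq_mul]
  calc Real.sqrt (∑ i, v i ^ 2) ≤ Real.sqrt ((d:ℝ) * c ^ 2) := Real.sqrt_le_sqrt h1
    _ = Real.sqrt d * c := by
        rw [Real.sqrt_mul (by positivity), Real.sqrt_sq hc]

/-- covering: every point is within `√d · 2π/N` of a grid point -/
lemma exists_gp_near {N : ℕ} (hN : 0 < N) (x : Torus d) :
    ∃ j : Fin d → Fin N, tdist (gp N j) x ≤ Real.sqrt d * (2 * Real.pi / N) := by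
  have hNR : (0:ℝ) < N := by exact_mod_cast hN
  have hfl : ∀ i, ⌊lift x i * N / (2 * Real.pi)⌋₊ < N := by
    intro i
    have h2 : lift x i * N / (2 * Real.pi) < N := by
      rw [div_lt_iff₀ (by positivity)]
      have := (lift_mem_Ico x i).2
      nlinarith
    have hu0 := (lift_mem_Ico x i).1
    exact (Nat.floor_lt (div_nonneg (mul_nonneg hu0 hNR.le) (by positivity))).mpr h2
  refine ⟨fun i => ⟨⌊lift x i * N / (2 * Real.pi)⌋₊, hfl i⟩, ?_⟩
  refine (tdist_le _ x 0).trans ?_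
  apply sqrt_sum_le (by positivity)
  intro i
  rw [lift_gp hN]
  simp only [Pi.zero_apply, Int.cast_zero, mul_zero, sub_zero]
  set u := lift x i with hu
  set fl : ℕ := ⌊u * N / (2 * Real.pi)⌋₊ with hfl2
  have hu0 : 0 ≤ u := (lift_mem_Ico x i).1
  have hl' : (fl : ℝ) * (2 * Real.pi) ≤ u * N :=
    (le_div_iff₀ (by positivity)).mp (Nat.floor_le (div_nonneg (mul_nonneg hu0 hNR.le) (by positivity)))
  have hr' : u * N < ((fl : ℝ) + 1) * (2 * Real.pi) := by
    have := Nat.lt_floor_add_one (u * N / (2 * Real.pi))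
    have h3 := (div_lt_iff₀ (by positivity : (0:ℝ) < 2 * Real.pi)).mp this
    exact_mod_cast h3
  have hD1 : 2 * Real.pi * (fl:ℝ) / N ≤ u := by
    rw [div_le_iff₀ hNR]; nlinarith
  have hD2 : u ≤ 2 * Real.pi * (fl:ℝ) / N + 2 * Real.pi / N := by
    rw [← add_div, le_div_iff₀ hNR]; nlinarith
  exact sq_le_sq' (by linarith) (by linarith)

/-- distance between grid points differing in one coordinate by one unit -/
lemma tdist_gp_update {N : ℕ} (hN : 0 < N) (j : Fin d → Fin N) (i₀ : Fin d) (v : Fin N)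
    (hv : ((v : ℕ) : ℝ) = (j i₀ : ℝ) - 1) :
    tdist (gp N j) (gp N (Function.update j i₀ v)) ≤ 2 * Real.pi / N := by
  have hNR : (0:ℝ) < N := by exact_mod_cast hN
  refine (tdist_le _ _ 0).trans ?_
  have key : ∀ i, (lift (gp N j) i - lift (gp N (Function.update j i₀ v)) i
      - 2 * Real.pi * ((0 : Fin d → ℤ) i)) ^ 2
      = if i = i₀ then (2 * Real.pi / N) ^ 2 else 0 := by
    intro i
    rw [lift_gp hN, lift_gp hN]
    simp only [Pi.zero_apply, Int.cast_zero, mul_zero, sub_zero]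
    by_cases h : i = i₀
    · subst h
      rw [Function.update_self, hv, if_pos rfl]
      congr 1
      ring
    · rw [Function.update_of_ne h, if_neg h]
      simp
  have hsum : (∑ i, (lift (gp N j) i - lift (gp N (Function.update j i₀ v)) i
      - 2 * Real.pi * ((0 : Fin d → ℤ) i)) ^ 2) = (2 * Real.pi / N) ^ 2 := by
    rw [Finset.sum_congr rfl (fun i _ => key i)]
    simp
  rw [hsum, Real.sqrt_sq (by positivity)]

lemma measurable_tdist (c : Torus d) : Measurable (fun x : Torus d => tdist c x) := by
  apply Measurable.iInf
  intro k
  apply Measurable.sqrt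
  apply Finset.measurable_sum
  intro i _
  have : Measurable fun x : Torus d => lift x i :=
    (AddCircle.measurableEquivIco (2 * Real.pi) 0).measurable.subtype_val.comp
      (measurable_pi_apply i)
  fun_prop

lemma measurableSet_ball (c : Torus d) (r : ℝ) :
    MeasurableSet {x : Torus d | tdist c x < r} :=
  measurableSet_lt (measurable_tdist c) measurable_const

/-- lower bound for measures with density bounded below -/
lemma density_lower {ρ : Measure (Torus d)} {f : Torus d → ℝ} {m : ℝ}
    (hρ : HasDensity ρ f) (hf : ∀ x, m ≤ f x) {A : Set (Torus d)} (hA : MeasurableSet A) :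
    ENNReal.ofReal m * volume A ≤ ρ A := by
  rw [hρ, withDensity_apply _ hA]
  calc ENNReal.ofReal m * volume A = ∫⁻ _x in A, ENNReal.ofReal m ∂volume := by
        rw [setLIntegral_const]
    _ ≤ ∫⁻ x in A, ENNReal.ofReal (f x) ∂volume :=
        lintegral_mono fun x => ENNReal.ofReal_le_ofReal (hf x)

/-- small product set around a center -/
def smallBox (c : Torus d) (t : ℝ) : Set (Torus d) :=
  Set.pi Set.univ (fun i => Metric.closedBall (c i) (t / 2))

lemma smallBox_volume (c : Torus d) {t : ℝ} (ht : 0 < t) (ht2 : t ≤ 2 * Real.pi) :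
    volume (smallBox c t) = (ENNReal.ofReal t) ^ d := by
  rw [smallBox, volume_pi_pi]
  have : ∀ i : Fin d, volume (Metric.closedBall (c i) (t / 2)) = ENNReal.ofReal t := by
    intro i
    rw [AddCircle.volume_closedBall]
    congr 1
    rw [min_eq_right]
    · ring
    · linarith
  rw [Finset.prod_congr rfl fun i _ => this i]
  simp

lemma smallBox_subset {c c' : Torus d} {t s : ℝ} (ht : 0 < t)
    (hts : Real.sqrt d * (t / 2) + tdist c' c < s) :
    smallBox c t ⊆ {x : Torus d | tdist c' x < s} := by
  intro x hx
  have h1 : tdist c x ≤ Real.sqrt d * (t / 2) := by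
    refine (tdist_le_sqrt_dist c x).trans ?_
    apply sqrt_sum_le (by positivity)
    intro i
    have hxi : x i ∈ Metric.closedBall (c i) (t / 2) := hx i (Set.mem_univ i)
    rw [Metric.mem_closedBall] at hxi
    have : dist (c i) (x i) ≤ t / 2 := by rw [dist_comm]; exact hxi
    have h0 : (0:ℝ) ≤ dist (c i) (x i) := dist_nonneg
    nlinarith
  have h2 : tdist c' x ≤ tdist c' c + tdist c x := tdist_triangle c' c x
  simp only [Set.mem_setOf_eq]
  linarith

/-- continuous functions are integrable on the (compact) torus -/
lemma cont_integrable {μ : Measure (Torus d)} [IsFiniteMeasure μ] {g : Torus d → ℝ}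
    (hg : Continuous g) : Integrable g μ :=
  hg.integrable_of_hasCompactSupport
    (IsCompact.of_isClosed_subset isCompact_univ (isClosed_tsupport g) (Set.subset_univ _))

lemma normRestrict_integral (ρ : Measure (Torus d)) (Q : Set (Torus d)) (h : Torus d → ℝ) :
    ∫ x, h x ∂(normRestrict ρ Q) = (ρ Q).toReal⁻¹ * ∫ x in Q, h x ∂ρ := by
  rw [normRestrict, integral_smul_measure, ENNReal.toReal_inv, smul_eq_mul]

/-- `ρ(Q) · Var_{ρ_Q}(g) = ∫_Q (g - mean_Q)²` -/
lemma restrict_var (ρ : Measure (Torus d)) {Q : Set (Torus d)}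
    (h0 : ρ Q ≠ 0) (hfin : ρ Q ≠ ⊤) (g : Torus d → ℝ) :
    (ρ Q).toReal * Var (normRestrict ρ Q) g
      = ∫ x in Q, (g x - ∫ y, g y ∂(normRestrict ρ Q)) ^ 2 ∂ρ := by
  have htr : (ρ Q).toReal ≠ 0 := by
    simp [ENNReal.toReal_eq_zero_iff, h0, hfin]
  rw [Var, normRestrict_integral]
  field_simp

lemma var_nonneg (μ : Measure (Torus d)) (g : Torus d → ℝ) : 0 ≤ Var μ g :=
  integral_nonneg fun x => sq_nonneg _

lemma var_le_integral_sq {ρ : Measure (Torus d)} [IsProbabilityMeasure ρ] {g : Torus d → ℝ}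
    (hg : Continuous g) (a : ℝ) : Var ρ g ≤ ∫ x, (g x - a) ^ 2 ∂ρ := by
  set mρ := ∫ y, g y ∂ρ with hm
  have hgi : Integrable g ρ := cont_integrable hg
  have hi1 : Integrable (fun x => (g x - mρ) ^ 2) ρ := cont_integrable (by continuity)
  have hi2 : Integrable (fun x => 2 * (mρ - a) * g x
      + ((mρ - a) ^ 2 - 2 * (mρ - a) * mρ)) ρ := cont_integrable (by continuity)
  have key : ∫ x, (g x - a) ^ 2 ∂ρ = Var ρ g + (mρ - a) ^ 2 := by
    have h1 : ∫ x, (g x - a) ^ 2 ∂ρ = ∫ x, ((g x - mρ) ^ 2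
        + (2 * (mρ - a) * g x + ((mρ - a) ^ 2 - 2 * (mρ - a) * mρ))) ∂ρ := by
      congr 1; funext x; ring
    rw [h1, integral_add hi1 hi2,
      integral_add (hgi.const_mul _) (integrable_const _),
      integral_const, integral_const_mul, Var]
    simp only [measureReal_def, measure_univ, ENNReal.toReal_one, one_smul, ← hm]
    ring
  have := sq_nonneg (mρ - a)
  linarith

lemma mean_diff {ρ : Measure (Torus d)} [IsProbabilityMeasure ρ] {g : Torus d → ℝ}
    (hg : Continuous g) {Q Q' : Set (Torus d)}
    {β : ℝ} (hβ : 0 < β) (hβle : β ≤ (ρ (Q ∩ Q')).toReal)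
    (h0 : ρ Q ≠ 0) (h0' : ρ Q' ≠ 0) :
    (∫ y, g y ∂(normRestrict ρ Q) - ∫ y, g y ∂(normRestrict ρ Q')) ^ 2 * β ≤
      2 * ((ρ Q).toReal * Var (normRestrict ρ Q) g
        + (ρ Q').toReal * Var (normRestrict ρ Q') g) := by
  set mQ := ∫ y, g y ∂(normRestrict ρ Q) with hmQ
  set mQ' := ∫ y, g y ∂(normRestrict ρ Q') with hmQ'
  have hint : Integrable g ρ := cont_integrable hg
  have hiQ : Integrable (fun x => (g x - mQ) ^ 2) ρ := cont_integrable (by continuity)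
  have hiQ' : Integrable (fun x => (g x - mQ') ^ 2) ρ := cont_integrable (by continuity)
  have I1 : (ρ (Q ∩ Q')).toReal * (mQ - mQ') ^ 2
      = ∫ _x in Q ∩ Q', (mQ - mQ') ^ 2 ∂ρ := by
    rw [setIntegral_const, smul_eq_mul, measureReal_def]
  have I2 : ∫ _x in Q ∩ Q', (mQ - mQ') ^ 2 ∂ρ
      ≤ ∫ x in Q ∩ Q', (2 * (g x - mQ) ^ 2 + 2 * (g x - mQ') ^ 2) ∂ρ := by
    apply integral_mono (integrable_const _)
    · exact ((hiQ.const_mul 2).add (hiQ'.const_mul 2)).integrableOn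
    · intro x
      simp only
      nlinarith [sq_nonneg ((g x - mQ) + (g x - mQ'))]
  have I3 : ∫ x in Q ∩ Q', (2 * (g x - mQ) ^ 2 + 2 * (g x - mQ') ^ 2) ∂ρ
      = 2 * ∫ x in Q ∩ Q', (g x - mQ) ^ 2 ∂ρ + 2 * ∫ x in Q ∩ Q', (g x - mQ') ^ 2 ∂ρ := by
    rw [integral_add (hiQ.const_mul 2).integrableOn (hiQ'.const_mul 2).integrableOn,
      integral_const_mul, integral_const_mul]
  have I4 : ∫ x in Q ∩ Q', (g x - mQ) ^ 2 ∂ρ ≤ ∫ x in Q, (g x - mQ) ^ 2 ∂ρ :=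
    setIntegral_mono_set hiQ.integrableOn
      (Filter.Eventually.of_forall fun x => sq_nonneg _)
      (HasSubset.Subset.eventuallyLE Set.inter_subset_left)
  have I5 : ∫ x in Q ∩ Q', (g x - mQ') ^ 2 ∂ρ ≤ ∫ x in Q', (g x - mQ') ^ 2 ∂ρ :=
    setIntegral_mono_set hiQ'.integrableOn
      (Filter.Eventually.of_forall fun x => sq_nonneg _)
      (HasSubset.Subset.eventuallyLE Set.inter_subset_right)
  have hV : (ρ Q).toReal * Var (normRestrict ρ Q) g = ∫ x in Q, (g x - mQ) ^ 2 ∂ρ :=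
    restrict_var ρ h0 (measure_ne_top ρ Q) g
  have hV' : (ρ Q').toReal * Var (normRestrict ρ Q') g = ∫ x in Q', (g x - mQ') ^ 2 ∂ρ :=
    restrict_var ρ h0' (measure_ne_top ρ Q') g
  have hb : (mQ - mQ') ^ 2 * β ≤ (ρ (Q ∩ Q')).toReal * (mQ - mQ') ^ 2 := by
    nlinarith [sq_nonneg (mQ - mQ')]
  rw [hV, hV']
  linarith

lemma integral_le_sum_cover {ρ : Measure (Torus d)} [IsFiniteMeasure ρ]
    {ι : Type*} [Fintype ι] {Q : ι → Set (Torus d)}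
    (hcov : (⋃ z, Q z) = Set.univ) {h : Torus d → ℝ} (hh : Continuous h)
    (hpos : ∀ x, 0 ≤ h x) :
    ∫ x, h x ∂ρ ≤ ∑ z, ∫ x in Q z, h x ∂ρ := by
  have hint : Integrable h ρ := cont_integrable hh
  have hle : ρ ≤ Measure.sum (fun z => ρ.restrict (Q z)) := by
    have h1 := Measure.restrict_iUnion_le (μ := ρ) (s := Q)
    rwa [hcov, Measure.restrict_univ] at h1
  have hisum : Integrable h (Measure.sum fun z => ρ.restrict (Q z)) := by
    rw [Measure.sum_fintype]
    exact integrable_finset_sum_measure.mpr fun z _ => hint.integrableOn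
  calc ∫ x, h x ∂ρ ≤ ∫ x, h x ∂(Measure.sum fun z => ρ.restrict (Q z)) :=
        integral_mono_measure hle (Filter.Eventually.of_forall hpos) hisum
    _ = ∑ z, ∫ x in Q z, h x ∂ρ := by
        rw [Measure.sum_fintype, integral_finset_sum_measure fun z _ => hint.integrableOn]

/-- the common radius of the covering balls -/
noncomputable def radf (r₀ : ℝ) : ℝ := min r₀ 1 / 2

/-- the number of grid points per dimension -/
noncomputable def Nf (d : ℕ) (r₀ : ℝ) : ℕ := ⌈8 * Real.pi * Real.sqrt d / radf r₀⌉₊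

/-- the coordinate width of the small boxes -/
noncomputable def tf (d : ℕ) (r₀ : ℝ) : ℝ := radf r₀ / (2 * Real.sqrt d)

end S9

set_option maxHeartbeats 1000000

/-- Boman-type covering and variance decomposition: for a probability
measure `ρ` on `𝕋^d` with density in `[m, M]` and any `r₀ > 0`, there are a finite cover
of `𝕋^d` by open balls of radii `< r₀`, and constants `A ≥ 1`, `κ > 0` depending only on
`d, m, M, r₀`, such that the `2`-enlarged balls have overlap at most `A` and the variance
of every continuous `f` is bounded by `κ` times the sum of localized variances. -/
theorem statement9 (d : ℕ) (hd : 1 ≤ d) :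
    ∃ A κ : ℝ → ℝ → ℝ → ℝ,
      ∀ (m M : ℝ), 0 < m → m ≤ M →
      ∀ (ρ : Measure (Torus d)), IsProbabilityMeasure ρ →
      ∀ f : Torus d → ℝ, HasDensity ρ f → (∀ x, m ≤ f x ∧ f x ≤ M) →
      ∀ r₀ : ℝ, 0 < r₀ →
        1 ≤ A m M r₀ ∧ 0 < κ m M r₀ ∧
        ∃ (n : ℕ) (c : Fin n → Torus d) (rad : Fin n → ℝ),
          (∀ i, 0 < rad i ∧ rad i < r₀) ∧
          (⋃ i, {x | tdist (c i) x < rad i}) = Set.univ ∧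
          (∀ x : Torus d,
            (({i : Fin n | tdist (c i) x < 2 * rad i}.ncard : ℝ) ≤ A m M r₀)) ∧
          (∀ g : Torus d → ℝ, Continuous g →
            Var ρ g ≤ κ m M r₀ *
              ∑ i : Fin n, (ρ {x | tdist (c i) x < rad i}).toReal *
                Var (normRestrict ρ {x | tdist (c i) x < rad i}) g) := by
  classical
  refine ⟨fun _ _ r₀ => ((S9.Nf d r₀ : ℝ)) ^ d,
    fun m _ r₀ => 2 + 8 * (d : ℝ) ^ 2 * ((S9.Nf d r₀ : ℝ)) ^ (d + 2)
      / (m * (S9.tf d r₀) ^ d), ?_⟩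
  intro m M hm hmM ρ hρ f hρf hfb r₀ hr₀
  have hdR : (1 : ℝ) ≤ d := by exact_mod_cast hd
  have hsd : (1 : ℝ) ≤ Real.sqrt d := by
    rw [show (1 : ℝ) = Real.sqrt 1 by simp]
    exact Real.sqrt_le_sqrt hdR
  have hsd0 : (0 : ℝ) < Real.sqrt d := by linarith
  have hπ := Real.pi_gt_three
  set rad := S9.radf r₀ with hraddef
  have hrad0 : 0 < rad := by
    rw [hraddef, S9.radf]
    have := lt_min hr₀ one_pos
    linarith
  have hrad1 : rad ≤ 1 / 2 := by
    rw [hraddef, S9.radf]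
    have : min r₀ 1 ≤ 1 := min_le_right _ _
    linarith
  have hradr0 : rad < r₀ := by
    rw [hraddef, S9.radf]
    have : min r₀ 1 ≤ r₀ := min_le_left _ _
    linarith
  set N := S9.Nf d r₀ with hNdef
  have hNpos : 0 < N := by
    rw [hNdef, S9.Nf, ← hraddef]
    exact Nat.ceil_pos.mpr (by positivity)
  have hNR : (0 : ℝ) < N := by exact_mod_cast hNpos
  have hNge : 8 * Real.pi * Real.sqrt d / rad ≤ N := by
    rw [hNdef, S9.Nf, ← hraddef]
    exact Nat.le_ceil _
  have hstep : 2 * Real.pi / N ≤ rad / (4 * Real.sqrt d) := by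
    rw [div_le_div_iff₀ hNR (by positivity)]
    rw [div_le_iff₀ hrad0] at hNge
    nlinarith
  set t := S9.tf d r₀ with htdef
  have htrad : t = rad / (2 * Real.sqrt d) := by rw [htdef, S9.tf, ← hraddef]
  have ht0 : 0 < t := by rw [htrad]; positivity
  have ht2π : t ≤ 2 * Real.pi := by
    rw [htrad]
    have h1 : rad / (2 * Real.sqrt d) ≤ rad := by
      rw [div_le_iff₀ (by positivity)]
      nlinarith
    nlinarith
  have hhalf : Real.sqrt d * (t / 2) = rad / 4 := by
    rw [htrad]
    field_simp
    ring
  set n := N ^ d with hndef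
  have hcard : Fintype.card (Fin d → Fin N) = n := by
    simp [hndef]
  set e : Fin n ≃ (Fin d → Fin N) := (Fintype.equivFinOfCardEq hcard).symm with hedef
  set Q : (Fin d → Fin N) → Set (Torus d) :=
    fun z => {x | tdist (S9.gp N z) x < rad} with hQdef
  have hQm : ∀ z, MeasurableSet (Q z) := fun z => S9.measurableSet_ball _ _
  -- covering
  have hcovι : (⋃ z, Q z) = Set.univ := by
    rw [Set.eq_univ_iff_forall]
    intro x
    obtain ⟨j, hj⟩ := S9.exists_gp_near (d := d) hNpos x
    refine Set.mem_iUnion.mpr ⟨j, ?_⟩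
    have h1 : Real.sqrt d * (2 * Real.pi / N) ≤ Real.sqrt d * (rad / (4 * Real.sqrt d)) :=
      mul_le_mul_of_nonneg_left hstep hsd0.le
    have h2 : Real.sqrt d * (rad / (4 * Real.sqrt d)) = rad / 4 := by
      field_simp
    have : tdist (S9.gp N j) x < rad := by
      rw [h2] at h1
      linarith [hj]
    exact this
  refine ⟨?_, ?_, n, fun i => S9.gp N (e i), fun _ => rad, ?_, ?_, ?_, ?_⟩
  · -- 1 ≤ A
    have h1 : (1 : ℝ) ≤ (N : ℝ) := by exact_mod_cast hNpos
    calc (1 : ℝ) = 1 ^ d := (one_pow d).symm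
      _ ≤ (N : ℝ) ^ d := pow_le_pow_left₀ zero_le_one h1 d
  · -- 0 < κ
    have h2 : (0 : ℝ) ≤ 8 * (d : ℝ) ^ 2 * ((N : ℝ)) ^ (d + 2) / (m * t ^ d) :=
      div_nonneg (by positivity) (mul_nonneg hm.le (pow_nonneg ht0.le d))
    linarith
  · exact fun i => ⟨hrad0, hradr0⟩
  · -- cover by Fin n
    rw [Set.eq_univ_iff_forall]
    intro x
    have hx := hcovι ▸ Set.mem_univ x
    obtain ⟨z, hz⟩ := Set.mem_iUnion.mp (by rw [hcovι]; exact Set.mem_univ x)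
    refine Set.mem_iUnion.mpr ⟨e.symm z, ?_⟩
    simpa [Equiv.apply_symm_apply, Q] using hz
  · -- overlap
    intro x
    have h1 : ({i : Fin n | tdist (S9.gp N (e i)) x < 2 * rad}).ncard ≤ n := by
      have h2 := Set.ncard_le_ncard
        (Set.subset_univ {i : Fin n | tdist (S9.gp N (e i)) x < 2 * rad}) Set.finite_univ
      simpa [Set.ncard_univ] using h2
    calc (({i : Fin n | tdist (S9.gp N (e i)) x < 2 * rad}).ncard : ℝ) ≤ (n : ℝ) := by
          exact_mod_cast h1
      _ = (N : ℝ) ^ d := by rw [hndef]; push_cast; ring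
  · -- variance inequality
    intro g hg
    set mean : (Fin d → Fin N) → ℝ := fun z => ∫ y, g y ∂(normRestrict ρ (Q z)) with hmeandef
    set V : (Fin d → Fin N) → ℝ := fun z => Var (normRestrict ρ (Q z)) g with hVdef
    set S := ∑ z, (ρ (Q z)).toReal * V z with hSdef
    have hterm : ∀ z, 0 ≤ (ρ (Q z)).toReal * V z :=
      fun z => mul_nonneg ENNReal.toReal_nonneg (S9.var_nonneg _ _)
    have hS0 : 0 ≤ S := Finset.sum_nonneg fun z _ => hterm z
    set βR := m * t ^ d with hβdef
    have hβ0 : 0 < βR := mul_pos hm (pow_pos ht0 d)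
    -- lower bound on intersections
    have hlow : ∀ z z', tdist (S9.gp N z) (S9.gp N z') ≤ rad / 4 →
        βR ≤ (ρ (Q z ∩ Q z')).toReal := by
      intro z z' hzz
      have hsub1 : S9.smallBox (S9.gp N z) t ⊆ Q z := by
        apply S9.smallBox_subset ht0
        rw [S9.tdist_self, hhalf]
        linarith
      have hsub2 : S9.smallBox (S9.gp N z) t ⊆ Q z' := by
        apply S9.smallBox_subset ht0
        rw [S9.tdist_symm (S9.gp N z') (S9.gp N z), hhalf]
        linarith
      have hboxm : MeasurableSet (S9.smallBox (S9.gp N z) t) :=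
        MeasurableSet.univ_pi fun i => measurableSet_closedBall
      have h1 : ENNReal.ofReal m * (ENNReal.ofReal t) ^ d ≤ ρ (S9.smallBox (S9.gp N z) t) := by
        have := S9.density_lower hρf (fun x => (hfb x).1) hboxm
        rwa [S9.smallBox_volume _ ht0 ht2π] at this
      have h2 : ρ (S9.smallBox (S9.gp N z) t) ≤ ρ (Q z ∩ Q z') :=
        measure_mono (Set.subset_inter hsub1 hsub2)
      have h3 : ENNReal.ofReal m * (ENNReal.ofReal t) ^ d ≤ ρ (Q z ∩ Q z') := h1.trans h2
      have h4 := ENNReal.toReal_mono (measure_ne_top ρ _) h3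
      rwa [ENNReal.toReal_mul, ENNReal.toReal_pow, ENNReal.toReal_ofReal hm.le,
        ENNReal.toReal_ofReal ht0.le] at h4
    have hQ0 : ∀ z, ρ (Q z) ≠ 0 := by
      intro z hz0
      have h1 := hlow z z (by rw [S9.tdist_self]; positivity)
      rw [Set.inter_self, hz0] at h1
      simp at h1
      linarith
    -- adjacent mean differences
    have hΔ : ∀ z z' : (Fin d → Fin N), tdist (S9.gp N z) (S9.gp N z') ≤ rad / 4 →
        |mean z - mean z'| ≤ Real.sqrt (4 * S / βR) := by
      intro z z' hzz
      have h1 := S9.mean_diff (ρ := ρ) hg hβ0 (hlow z z' hzz) (hQ0 z) (hQ0 z')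
      have h2 : (ρ (Q z)).toReal * V z ≤ S :=
        Finset.single_le_sum (fun w _ => hterm w) (Finset.mem_univ z)
      have h3 : (ρ (Q z')).toReal * V z' ≤ S :=
        Finset.single_le_sum (fun w _ => hterm w) (Finset.mem_univ z')
      have h4 : (mean z - mean z') ^ 2 ≤ 4 * S / βR := by
        rw [le_div_iff₀ hβ0]
        calc (mean z - mean z') ^ 2 * βR
            ≤ 2 * ((ρ (Q z)).toReal * V z + (ρ (Q z')).toReal * V z') := h1
          _ ≤ 4 * S := by linarith
      calc |mean z - mean z'| = Real.sqrt ((mean z - mean z') ^ 2) :=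
            (Real.sqrt_sq_eq_abs _).symm
        _ ≤ Real.sqrt (4 * S / βR) := Real.sqrt_le_sqrt h4
    set C := Real.sqrt (4 * S / βR) with hCdef
    have hC0 : 0 ≤ C := Real.sqrt_nonneg _
    set z₀ : (Fin d → Fin N) := fun _ => ⟨0, hNpos⟩ with hz₀def
    -- chaining
    have hchain : ∀ (Mn : ℕ) (z : Fin d → Fin N), (∑ i, ((z i : ℕ))) = Mn →
        |mean z - mean z₀| ≤ Mn * C := by
      intro Mn
      induction Mn with
      | zero =>
        intro z hz
        have hz' : z = z₀ := by
          funext i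
          have h1 : (z i : ℕ) = 0 := by
            have := Finset.sum_eq_zero_iff.mp hz i (Finset.mem_univ i)
            exact this
          exact Fin.ext h1
        rw [hz']
        simp
      | succ Mn ih =>
        intro z hz
        have hex : ∃ i₀, (z i₀ : ℕ) ≠ 0 := by
          by_contra hcon
          push_neg at hcon
          rw [Finset.sum_eq_zero (fun i _ => hcon i)] at hz
          exact Nat.succ_ne_zero Mn hz.symm
        obtain ⟨i₀, hi₀⟩ := hex
        have hpos : 1 ≤ (z i₀ : ℕ) := Nat.one_le_iff_ne_zero.mpr hi₀
        set v : Fin N := ⟨(z i₀ : ℕ) - 1, lt_of_le_of_lt (Nat.sub_le _ _) (z i₀).2⟩ with hvdef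
        set z' := Function.update z i₀ v with hz'def
        have hvcast : ((v : ℕ) : ℝ) = ((z i₀ : ℕ) : ℝ) - 1 := by
          rw [hvdef]
          push_cast [Nat.cast_sub hpos]
          ring
        have hadj : tdist (S9.gp N z) (S9.gp N z') ≤ rad / 4 := by
          have h1 := S9.tdist_gp_update hNpos z i₀ v hvcast
          have h2 : rad / (4 * Real.sqrt d) ≤ rad / 4 := by
            rw [div_le_div_iff₀ (by positivity) (by norm_num : (0:ℝ) < 4)]
            nlinarith
          exact h1.trans (hstep.trans h2)
        have hsum' : (∑ i, ((z' i : ℕ))) = Mn := by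
          have h1 : (∑ i, ((z' i : ℕ))) = (v : ℕ) + ∑ i ∈ Finset.univ.erase i₀, (z i : ℕ) := by
            rw [hz'def]
            rw [← Finset.add_sum_erase _ _ (Finset.mem_univ i₀)]
            congr 1
            · rw [Function.update_self]
            · apply Finset.sum_congr rfl
              intro i hi
              rw [Function.update_of_ne (Finset.ne_of_mem_erase hi)]
          have h2 : (∑ i, ((z i : ℕ))) = (z i₀ : ℕ) + ∑ i ∈ Finset.univ.erase i₀, (z i : ℕ) :=
            (Finset.add_sum_erase _ _ (Finset.mem_univ i₀)).symm
          have h3 : (v : ℕ) = (z i₀ : ℕ) - 1 := rfl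
          omega
        have hih := ih z' hsum'
        have htri : |mean z - mean z₀| ≤ |mean z - mean z'| + |mean z' - mean z₀| :=
          abs_sub_le _ _ _
        have hstepb := hΔ z z' hadj
        push_cast
        calc |mean z - mean z₀| ≤ |mean z - mean z'| + |mean z' - mean z₀| := htri
          _ ≤ C + Mn * C := add_le_add hstepb hih
          _ = (Mn + 1) * C := by ring
    -- mean deviation bound
    have hmeanb : ∀ z, (mean z - mean z₀) ^ 2 ≤ ((d : ℝ) * N) ^ 2 * (4 * S / βR) := by
      intro z
      have h1 : ((∑ i, ((z i : ℕ)) : ℕ) : ℝ) ≤ (d : ℝ) * N := by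
        push_cast
        calc (∑ i, ((z i : ℕ) : ℝ)) ≤ ∑ _i : Fin d, (N : ℝ) :=
              Finset.sum_le_sum fun i _ => by
                have : (z i : ℕ) < N := (z i).2
                exact_mod_cast this.le
          _ = (d : ℝ) * N := by simp [Finset.sum_const, nsmul_eq_mul]
      have h2 := hchain (∑ i, ((z i : ℕ))) z rfl
      have h3 : |mean z - mean z₀| ≤ (d : ℝ) * N * C := by
        refine h2.trans ?_
        exact mul_le_mul_of_nonneg_right h1 hC0
      have h4 : (mean z - mean z₀) ^ 2 ≤ ((d : ℝ) * N * C) ^ 2 := by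
        rw [← sq_abs]
        exact pow_le_pow_left₀ (abs_nonneg _) h3 2
      have h6 : C ^ 2 = 4 * S / βR := Real.sq_sqrt (by positivity)
      calc (mean z - mean z₀) ^ 2 ≤ ((d : ℝ) * N * C) ^ 2 := h4
        _ = ((d : ℝ) * N) ^ 2 * C ^ 2 := by ring
        _ = ((d : ℝ) * N) ^ 2 * (4 * S / βR) := by rw [h6]
    -- final assembly
    set a := mean z₀ with hadef
    have hmain : Var ρ g ≤ ∑ z, ∫ x in Q z, (g x - a) ^ 2 ∂ρ := by
      refine (S9.var_le_integral_sq hg a).trans ?_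
      exact S9.integral_le_sum_cover hcovι ((hg.sub continuous_const).pow 2) (fun x => sq_nonneg _)
    have hzbound : ∀ z, ∫ x in Q z, (g x - a) ^ 2 ∂ρ ≤
        2 * ((ρ (Q z)).toReal * V z) + 2 * (((d : ℝ) * N) ^ 2 * (4 * S / βR)) := by
      intro z
      have hi1 : Integrable (fun x => (g x - mean z) ^ 2) ρ :=
        S9.cont_integrable ((hg.sub continuous_const).pow 2)
      have h1 : ∫ x in Q z, (g x - a) ^ 2 ∂ρ ≤
          ∫ x in Q z, (2 * (g x - mean z) ^ 2 + 2 * (mean z - a) ^ 2) ∂ρ := by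
        apply integral_mono
          (S9.cont_integrable (g := fun x => (g x - a) ^ 2) ((hg.sub continuous_const).pow 2)).integrableOn
          ((hi1.const_mul 2).integrableOn.add (integrable_const _))
        intro x
        show (g x - a) ^ 2 ≤ 2 * (g x - mean z) ^ 2 + 2 * (mean z - a) ^ 2
        nlinarith [sq_nonneg ((g x - mean z) - (mean z - a))]
      have h2 : ∫ x in Q z, (2 * (g x - mean z) ^ 2 + 2 * (mean z - a) ^ 2) ∂ρ
          = 2 * ∫ x in Q z, (g x - mean z) ^ 2 ∂ρ
            + (ρ (Q z)).toReal * (2 * (mean z - a) ^ 2) := by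
        rw [integral_add (hi1.const_mul 2).integrableOn (integrable_const _),
          integral_const_mul, setIntegral_const, smul_eq_mul, measureReal_def]
      have h3 : ∫ x in Q z, (g x - mean z) ^ 2 ∂ρ = (ρ (Q z)).toReal * V z :=
        (S9.restrict_var ρ (hQ0 z) (measure_ne_top ρ _) g).symm
      have h4 : (ρ (Q z)).toReal ≤ 1 := by
        have hp := prob_le_one (μ := ρ) (s := Q z)
        have hp2 := ENNReal.toReal_mono (by simp) hp
        simpa using hp2
      have h5 : (ρ (Q z)).toReal * (2 * (mean z - a) ^ 2)
          ≤ 2 * (((d : ℝ) * N) ^ 2 * (4 * S / βR)) := by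
        have hnn : (0:ℝ) ≤ 2 * (mean z - a) ^ 2 := by positivity
        calc (ρ (Q z)).toReal * (2 * (mean z - a) ^ 2) ≤ 1 * (2 * (mean z - a) ^ 2) :=
              mul_le_mul_of_nonneg_right h4 hnn
          _ = 2 * (mean z - a) ^ 2 := one_mul _
          _ ≤ 2 * (((d : ℝ) * N) ^ 2 * (4 * S / βR)) := by
              have := hmeanb z
              linarith
      calc ∫ x in Q z, (g x - a) ^ 2 ∂ρ
          ≤ ∫ x in Q z, (2 * (g x - mean z) ^ 2 + 2 * (mean z - a) ^ 2) ∂ρ := h1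
        _ = 2 * ∫ x in Q z, (g x - mean z) ^ 2 ∂ρ
            + (ρ (Q z)).toReal * (2 * (mean z - a) ^ 2) := h2
        _ ≤ 2 * ((ρ (Q z)).toReal * V z) + 2 * (((d : ℝ) * N) ^ 2 * (4 * S / βR)) := by
            rw [h3]
            linarith
    have hsumb : ∑ z, ∫ x in Q z, (g x - a) ^ 2 ∂ρ ≤
        2 * S + (n : ℝ) * (2 * (((d : ℝ) * N) ^ 2 * (4 * S / βR))) := by
      calc ∑ z, ∫ x in Q z, (g x - a) ^ 2 ∂ρ
          ≤ ∑ z, (2 * ((ρ (Q z)).toReal * V z)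
            + 2 * (((d : ℝ) * N) ^ 2 * (4 * S / βR))) :=
            Finset.sum_le_sum fun z _ => hzbound z
        _ = 2 * S + (n : ℝ) * (2 * (((d : ℝ) * N) ^ 2 * (4 * S / βR))) := by
            rw [Finset.sum_add_distrib, ← Finset.mul_sum, Finset.sum_const,
              nsmul_eq_mul, ← hSdef, Finset.card_univ, hcard]
    have hId : (∑ i : Fin n, (ρ {x | tdist (S9.gp N (e i)) x < rad}).toReal *
        Var (normRestrict ρ {x | tdist (S9.gp N (e i)) x < rad}) g) = S := by
      rw [hSdef]
      exact Fintype.sum_equiv e _ _ (fun i => rfl)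
    have hfinal : 2 * S + (n : ℝ) * (2 * (((d : ℝ) * N) ^ 2 * (4 * S / βR)))
        = (2 + 8 * (d : ℝ) ^ 2 * ((N : ℝ)) ^ (d + 2) / βR) * S := by
      have hpow : ((N : ℝ)) ^ (d + 2) = (N : ℝ) ^ d * (N : ℝ) ^ 2 := pow_add _ _ _
      have hncast : ((n : ℕ) : ℝ) = (N : ℝ) ^ d := by rw [hndef]; push_cast; ring
      field_simp
      rw [hpow, hncast]
      ring
    calc Var ρ g ≤ ∑ z, ∫ x in Q z, (g x - a) ^ 2 ∂ρ := hmain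
      _ ≤ 2 * S + (n : ℝ) * (2 * (((d : ℝ) * N) ^ 2 * (4 * S / βR))) := hsumb
      _ = (2 + 8 * (d : ℝ) ^ 2 * ((N : ℝ)) ^ (d + 2) / βR) * S := hfinal
      _ = (2 + 8 * (d : ℝ) ^ 2 * ((N : ℝ)) ^ (d + 2) / βR) *
          ∑ i : Fin n, (ρ {x | tdist (S9.gp N (e i)) x < rad}).toReal *
            Var (normRestrict ρ {x | tdist (S9.gp N (e i)) x < rad}) g := by rw [hId]
end
end

section
/- For every integer d ≥ 1, every ε with 0 < ε < π²/2, and every x ∈ 𝕋^d, the Gaussian kernel satisfies (2πε)^{−d/2}·exp(−dist(x, 0)²/(2ε)) ≤ K_ε(x) ≤ 2^{d+1}·e^{5d}·(2πε)^{−d/2}·exp(−dist(x, 0)²/(2ε)), where dist(x,0) denotes the torus distance from x to the identity element 0 of 𝕋^d. -/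
open MeasureTheory Real

noncomputable section

open Torus
section GaussAux

open Real

private lemma exp4_gt : (3:ℝ) < Real.exp 4 := by
  nlinarith [Real.add_one_lt_exp (by norm_num : (4:ℝ) ≠ 0)]

private lemma hre (k : ℤ) : Real.exp (-4 * |(k:ℝ)|) = Real.exp (-4) ^ k.natAbs := by
  rw [← Real.exp_nat_mul]; congr 1; rw [Nat.cast_natAbs]; push_cast; ring

private lemma natAbs_neg_succ (n : ℕ) : (-((n:ℤ)+1)).natAbs = n + 1 := by omega

private lemma hsumh : Summable (fun k : ℤ => Real.exp (-4 * |(k:ℝ)|)) := by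
  have h1 : Real.exp (-4) < 1 := Real.exp_lt_one_iff.2 (by norm_num)
  have hg := summable_geometric_of_lt_one (Real.exp_pos (-4)).le h1
  apply Summable.of_nat_of_neg_add_one
  · exact hg.congr (fun n => by rw [hre]; simp)
  · exact ((hg.mul_left (Real.exp (-4))).congr (fun n => by
      rw [hre, natAbs_neg_succ, pow_succ]; ring))

private lemma tsumh : ∑' k : ℤ, Real.exp (-4 * |(k:ℝ)|) ≤ 2 := by
  have h1 : Real.exp (-4) < 1 := Real.exp_lt_one_iff.2 (by norm_num)
  have h0 := (Real.exp_pos (-4)).le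
  have hg := summable_geometric_of_lt_one h0 h1
  rw [tsum_of_nat_of_neg_add_one
    (hg.congr (fun n => by rw [hre]; simp))
    ((hg.mul_left (Real.exp (-4))).congr (fun n => by
      rw [hre, natAbs_neg_succ, pow_succ]; ring))]
  have e1 : ∑' n : ℕ, Real.exp (-4 * |((n:ℤ):ℝ)|) = (1 - Real.exp (-4))⁻¹ := by
    rw [← tsum_geometric_of_lt_one h0 h1]
    exact tsum_congr fun n => by rw [hre]; simp
  have e2 : ∑' n : ℕ, Real.exp (-4 * |(((-((n:ℤ)+1)) : ℤ):ℝ)|)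
      = Real.exp (-4) * (1 - Real.exp (-4))⁻¹ := by
    rw [← tsum_geometric_of_lt_one h0 h1, ← tsum_mul_left]
    exact tsum_congr fun n => by rw [hre, natAbs_neg_succ, pow_succ]; ring
  rw [e1, e2]
  have hr3 : Real.exp (-4) < 1/3 := by
    rw [Real.exp_neg, inv_lt_comm₀ (Real.exp_pos 4) (by norm_num)]
    simpa using exp4_gt
  have hlt : (0:ℝ) < 1 - Real.exp (-4) := by linarith
  have hinv : (1 - Real.exp (-4)) * (1 - Real.exp (-4))⁻¹ = 1 := mul_inv_cancel₀ hlt.ne'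
  nlinarith [inv_pos.2 hlt]

private lemma key_ineq {ε t : ℝ} (hε0 : 0 < ε) (hε : 2 * ε < Real.pi ^ 2)
    (ht0 : 0 ≤ t) (ht2 : t < 2 * Real.pi) (k : ℤ) :
    (min t (2 * Real.pi - t)) ^ 2 + 2 * ε * (4 * |(k:ℝ)| - 5) ≤ (t - 2 * Real.pi * k) ^ 2 := by
  have hπ := Real.pi_pos
  set δ := min t (2 * Real.pi - t) with hδ
  have hδt : δ ≤ t := min_le_left _ _
  have hδs : δ ≤ 2 * Real.pi - t := min_le_right _ _
  have hδ0 : 0 ≤ δ := le_min ht0 (by linarith)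
  have hδπ : δ ≤ Real.pi := by
    rcases le_total t Real.pi with h | h
    · linarith [min_le_left t (2 * Real.pi - t)]
    · linarith [min_le_right t (2 * Real.pi - t)]
  obtain hk | hk | hk | hk : k ≤ -1 ∨ k = 0 ∨ k = 1 ∨ 2 ≤ k := by omega
  · have hkr : (k:ℝ) ≤ -1 := by exact_mod_cast hk
    have habs : |(k:ℝ)| = -(k:ℝ) := abs_of_nonpos (by linarith)
    have h1 : 2 * Real.pi * (-(k:ℝ)) ≤ t - 2 * Real.pi * k := by nlinarith
    have h2 : (2 * Real.pi * (-(k:ℝ)))^2 ≤ (t - 2 * Real.pi * k)^2 :=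
      pow_le_pow_left₀ (by nlinarith) h1 2
    rw [habs]
    nlinarith [sq_nonneg ((k:ℝ) + 1), sq_nonneg (k:ℝ), mul_pos hπ hπ]
  · subst hk; simp only [Int.cast_zero, abs_zero]
    nlinarith [pow_le_pow_left₀ hδ0 hδt 2]
  · subst hk; simp only [Int.cast_one, abs_one]
    have : δ^2 ≤ (2 * Real.pi - t)^2 := pow_le_pow_left₀ hδ0 hδs 2
    nlinarith
  · have hkr : (2:ℝ) ≤ (k:ℝ) := by exact_mod_cast hk
    have habs : |(k:ℝ)| = (k:ℝ) := abs_of_nonneg (by linarith)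
    have h1 : 2 * Real.pi * ((k:ℝ) - 1) ≤ 2 * Real.pi * k - t := by nlinarith
    have h2 : (2 * Real.pi * ((k:ℝ) - 1))^2 ≤ (t - 2 * Real.pi * k)^2 := by
      rw [show (t - 2 * Real.pi * k)^2 = (2 * Real.pi * k - t)^2 by ring]
      exact pow_le_pow_left₀ (by nlinarith) h1 2
    rw [habs]
    nlinarith [sq_nonneg ((k:ℝ) - 1), sq_nonneg ((k:ℝ) - 2), mul_pos hπ hπ,
      mul_nonneg (mul_nonneg (by linarith : (0:ℝ) ≤ (k:ℝ)-1)
        (by linarith : (0:ℝ) ≤ (k:ℝ)-2)) (by nlinarith : (0:ℝ) ≤ Real.pi^2 - 2*ε)]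

private lemma g1_le {ε t : ℝ} (hε0 : 0 < ε) (hε : 2 * ε < Real.pi ^ 2)
    (ht0 : 0 ≤ t) (ht2 : t < 2 * Real.pi) (k : ℤ) :
    Real.exp (-(t - 2 * Real.pi * k) ^ 2 / (2 * ε)) ≤
      Real.exp (-(min t (2 * Real.pi - t)) ^ 2 / (2 * ε)) *
        (Real.exp 5 * Real.exp (-4 * |(k:ℝ)|)) := by
  rw [← Real.exp_add, ← Real.exp_add]
  apply Real.exp_le_exp.2
  have h := key_ineq hε0 hε ht0 ht2 k
  rw [div_add' _ _ _ (show (2*ε) ≠ 0 by positivity),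
    div_le_div_iff₀ (by positivity) (by positivity)]
  nlinarith [h]

private lemma pi_fact {n : ℕ} (g : Fin n → ℤ → ℝ) (h0 : ∀ i k, 0 ≤ g i k)
    (hs : ∀ i, Summable (g i)) :
    Summable (fun k : Fin n → ℤ => ∏ i, g i (k i)) ∧
      ∑' k : Fin n → ℤ, ∏ i, g i (k i) = ∏ i, ∑' m : ℤ, g i m := by
  induction n with
  | zero =>
      constructor
      · exact .of_finite
      · rw [tsum_eq_single (default : Fin 0 → ℤ)
          (fun b hb => absurd (Subsingleton.elim b default) hb)]
        simp
  | succ n ih =>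
      obtain ⟨ihs, iht⟩ := ih (fun i => g i.succ) (fun i k => h0 _ _) (fun i => hs _)
      have hpn : ∀ k' : Fin n → ℤ, (0:ℝ) ≤ ∏ i, g i.succ (k' i) :=
        fun k' => Finset.prod_nonneg fun i _ => h0 _ _
      have hF := Summable.mul_of_nonneg (hs 0) ihs (fun k => h0 0 k) hpn
      have he : ∀ k : Fin (n+1) → ℤ,
          ∏ i, g i (k i) = g 0 (((Fin.consEquiv (fun _ : Fin (n+1) => ℤ)).symm) k).1 *
            ∏ i, g i.succ ((((Fin.consEquiv (fun _ : Fin (n+1) => ℤ)).symm) k).2 i) := by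
        intro k; rw [Fin.prod_univ_succ]; rfl
      have hnorm1 := (hs 0).congr (fun m => (Real.norm_of_nonneg (h0 0 m)).symm)
      have hnorm2 := ihs.congr (fun k' => (Real.norm_of_nonneg (hpn k')).symm)
      have hmul := tsum_mul_tsum_of_summable_norm hnorm1 hnorm2
      constructor
      · apply (Equiv.summable_iff (Fin.consEquiv (fun _ : Fin (n+1) => ℤ))).1
        apply hF.congr
        intro p
        simp [Fin.prod_univ_succ]
      · have heq := Equiv.tsum_eq ((Fin.consEquiv (fun _ : Fin (n+1) => ℤ)).symm)
          (fun p : ℤ × (Fin n → ℤ) => g 0 p.1 * ∏ i, g i.succ (p.2 i))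
        calc ∑' k : Fin (n+1) → ℤ, ∏ i, g i (k i)
            = ∑' p : ℤ × (Fin n → ℤ), g 0 p.1 * ∏ i, g i.succ (p.2 i) := by
              rw [← heq]
              exact tsum_congr he
          _ = (∑' m : ℤ, g 0 m) * ∑' k' : Fin n → ℤ, ∏ i, g i.succ (k' i) := hmul.symm
          _ = ∏ i, ∑' m : ℤ, g i m := by rw [iht, Fin.prod_univ_succ]

end GaussAux

namespace Torus
variable {d : ℕ}

lemma lift_mem (x : Torus d) (i : Fin d) : lift x i ∈ Set.Ico 0 (2 * Real.pi) := by
  have h := (AddCircle.equivIco (2 * Real.pi) 0 (x i)).2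
  simpa [lift] using h

lemma lift_zero (i : Fin d) : lift (0 : Torus d) i = 0 := by
  show ((AddCircle.equivIco (2 * Real.pi) 0 ((0 : Torus d) i)) : ℝ) = 0
  have : ((0 : Torus d) i) = (QuotientAddGroup.mk (0:ℝ) : AddCircle (2 * Real.pi)) := rfl
  rw [this, AddCircle.coe_equivIco_mk_apply]
  simp

lemma sq_dist_le {t : ℝ} (ht0 : 0 ≤ t) (ht2 : t < 2 * Real.pi) (k : ℤ) :
    (min t (2 * Real.pi - t)) ^ 2 ≤ (t - 2 * Real.pi * k) ^ 2 := by
  have hπ := Real.pi_pos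
  have hδ0 : 0 ≤ min t (2 * Real.pi - t) := le_min ht0 (by linarith)
  rcases le_or_gt k 0 with hk | hk
  · have hkr : (k:ℝ) ≤ 0 := by exact_mod_cast hk
    have : min t (2 * Real.pi - t) ≤ t - 2 * Real.pi * k := by
      have := min_le_left t (2 * Real.pi - t); nlinarith
    exact pow_le_pow_left₀ hδ0 this 2
  · have hkr : (1:ℝ) ≤ (k:ℝ) := by exact_mod_cast hk
    have h1 : min t (2 * Real.pi - t) ≤ 2 * Real.pi * k - t := by
      have := min_le_right t (2 * Real.pi - t); nlinarith
    calc (min t (2 * Real.pi - t))^2 ≤ (2 * Real.pi * k - t)^2 := pow_le_pow_left₀ hδ0 h1 2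
      _ = (t - 2 * Real.pi * k)^2 := by ring

lemma min_sq_eq {t : ℝ} (ht0 : 0 ≤ t) (ht2 : t < 2 * Real.pi) :
    (t - 2 * Real.pi * ((if t ≤ Real.pi then 0 else 1 : ℤ) : ℝ)) ^ 2
      = (min t (2 * Real.pi - t)) ^ 2 := by
  by_cases h : t ≤ Real.pi
  · simp only [if_pos h, Int.cast_zero]
    rw [min_eq_left (by linarith)]
    ring
  · simp only [if_neg h, Int.cast_one]
    rw [min_eq_right (by push_neg at h; linarith)]
    ring

lemma tdist_zero_eq (x : Torus d) :
    tdist x 0 = Real.sqrt (∑ i, (min (lift x i) (2 * Real.pi - lift x i)) ^ 2) := by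
  have hmem := fun i => lift_mem x i
  have h0 : ∀ i, lift (0 : Torus d) i = 0 := lift_zero
  set k₀ : Fin d → ℤ := fun i => if lift x i ≤ Real.pi then 0 else 1 with hk₀
  apply le_antisymm
  · have hb : BddBelow (Set.range fun k : Fin d → ℤ =>
        Real.sqrt (∑ i, (lift x i - lift (0:Torus d) i - 2 * Real.pi * (k i)) ^ 2)) := by
      refine ⟨0, ?_⟩
      rintro _ ⟨k, rfl⟩
      exact Real.sqrt_nonneg _
    refine le_trans (ciInf_le hb k₀) (le_of_eq ?_)
    congr 1
    refine Finset.sum_congr rfl fun i _ => ?_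
    rw [h0 i, sub_zero]
    exact min_sq_eq (hmem i).1 (hmem i).2
  · apply le_ciInf
    intro k
    apply Real.sqrt_le_sqrt
    apply Finset.sum_le_sum
    intro i _
    rw [h0 i, sub_zero]
    exact sq_dist_le (hmem i).1 (hmem i).2 (k i)

end Torus

/-- uniform bounds on the Gaussian kernel: for `0 < ε < π²/2`,
`(2πε)^{-d/2}·exp(-dist(x,0)²/(2ε)) ≤ K_ε(x) ≤ 2^{d+1}·e^{5d}·(2πε)^{-d/2}·exp(-dist(x,0)²/(2ε))`. -/
theorem statement13 (d : ℕ) (hd : 1 ≤ d) (ε : ℝ) (hε0 : 0 < ε) (hε : ε < Real.pi ^ 2 / 2)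
    (x : Torus d) :
    (2 * Real.pi * ε) ^ (-(d : ℝ) / 2) * Real.exp (-(tdist x 0) ^ 2 / (2 * ε)) ≤ gker ε x ∧
      gker ε x ≤ 2 ^ (d + 1) * Real.exp (5 * d) *
        ((2 * Real.pi * ε) ^ (-(d : ℝ) / 2) * Real.exp (-(tdist x 0) ^ 2 / (2 * ε))) := by
  have hπ := Real.pi_pos
  have hε2 : 2 * ε < Real.pi ^ 2 := by linarith
  have hmem := fun i => Torus.lift_mem x i
  set g : Fin d → ℤ → ℝ :=
    fun i m => Real.exp (-(lift x i - 2 * Real.pi * m) ^ 2 / (2 * ε)) with hgdef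
  have hg0 : ∀ i m, 0 ≤ g i m := fun i m => (Real.exp_pos _).le
  have hmaj : ∀ i, Summable (fun m : ℤ =>
      Real.exp (-(min (lift x i) (2 * Real.pi - lift x i)) ^ 2 / (2 * ε)) *
        (Real.exp 5 * Real.exp (-4 * |(m:ℝ)|))) := by
    intro i
    exact (hsumh.mul_left (Real.exp 5)).mul_left _
  have hgs : ∀ i, Summable (g i) := by
    intro i
    exact Summable.of_nonneg_of_le (fun m => hg0 i m)
      (fun m => g1_le hε0 hε2 (hmem i).1 (hmem i).2 m) (hmaj i)
  obtain ⟨hfs, hft⟩ := pi_fact g hg0 hgs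
  have hexp : ∀ k : Fin d → ℤ,
      Real.exp (-(∑ i, (lift x i - 2 * Real.pi * (k i)) ^ 2) / (2 * ε))
        = ∏ i, g i (k i) := by
    intro k
    rw [← Real.exp_sum]
    congr 1
    rw [← Finset.sum_div]
    congr 1
    rw [← Finset.sum_neg_distrib]
  have hgker : gker ε x = (2 * Real.pi * ε) ^ (-(d : ℝ) / 2) * ∑' k : Fin d → ℤ, ∏ i, g i (k i) := by
    rw [gker]
    congr 1
    exact tsum_congr hexp
  have hd2 : (tdist x 0) ^ 2 = ∑ i, (min (lift x i) (2 * Real.pi - lift x i)) ^ 2 := by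
    rw [tdist_zero_eq x]
    exact Real.sq_sqrt (Finset.sum_nonneg fun j _ => sq_nonneg _)
  have hE : Real.exp (-(tdist x 0) ^ 2 / (2 * ε))
      = ∏ i, Real.exp (-(min (lift x i) (2 * Real.pi - lift x i)) ^ 2 / (2 * ε)) := by
    rw [← Real.exp_sum]
    congr 1
    rw [hd2, ← Finset.sum_div, ← Finset.sum_neg_distrib]
  have hC : (0:ℝ) < (2 * Real.pi * ε) ^ (-(d : ℝ) / 2) :=
    Real.rpow_pos_of_pos (by positivity) _
  constructor
  · -- lower bound
    rw [hgker]
    apply mul_le_mul_of_nonneg_left _ hC.le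
    set k₀ : Fin d → ℤ := fun i => if lift x i ≤ Real.pi then 0 else 1 with hk₀
    have hval : ∏ i, g i (k₀ i) = Real.exp (-(tdist x 0) ^ 2 / (2 * ε)) := by
      rw [hE]
      refine Finset.prod_congr rfl fun i _ => ?_
      simp only [hgdef, hk₀]
      rw [Torus.min_sq_eq (hmem i).1 (hmem i).2]
    calc Real.exp (-(tdist x 0) ^ 2 / (2 * ε)) = ∏ i, g i (k₀ i) := hval.symm
      _ ≤ ∑' k : Fin d → ℤ, ∏ i, g i (k i) :=
          hfs.le_tsum k₀ fun k _ => Finset.prod_nonneg fun i _ => hg0 i (k i)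
  · -- upper bound
    rw [hgker]
    have hhsum := tsumh
    have hh0 : (0:ℝ) ≤ ∑' m : ℤ, Real.exp (-4 * |(m:ℝ)|) :=
      tsum_nonneg fun m => (Real.exp_pos _).le
    have hS : ∀ i, ∑' m : ℤ, g i m ≤
        Real.exp (-(min (lift x i) (2 * Real.pi - lift x i)) ^ 2 / (2 * ε)) * (2 * Real.exp 5) := by
      intro i
      have h1 : ∑' m : ℤ, g i m ≤ ∑' m : ℤ,
          Real.exp (-(min (lift x i) (2 * Real.pi - lift x i)) ^ 2 / (2 * ε)) *
            (Real.exp 5 * Real.exp (-4 * |(m:ℝ)|)) :=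
        Summable.tsum_le_tsum (fun m => g1_le hε0 hε2 (hmem i).1 (hmem i).2 m) (hgs i) (hmaj i)
      rw [tsum_mul_left, tsum_mul_left] at h1
      have hpos := Real.exp_pos (-(min (lift x i) (2 * Real.pi - lift x i)) ^ 2 / (2 * ε))
      refine h1.trans (mul_le_mul_of_nonneg_left ?_ hpos.le)
      nlinarith [mul_le_mul_of_nonneg_left hhsum (Real.exp_pos (5:ℝ)).le]
    have htsum_le : ∑' k : Fin d → ℤ, ∏ i, g i (k i) ≤
        Real.exp (-(tdist x 0) ^ 2 / (2 * ε)) * (2 ^ d * Real.exp (5 * d)) := by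
      rw [hft]
      calc ∏ i, ∑' m : ℤ, g i m
          ≤ ∏ i, (Real.exp (-(min (lift x i) (2 * Real.pi - lift x i)) ^ 2 / (2 * ε)) *
              (2 * Real.exp 5)) := by
            apply Finset.prod_le_prod
            · intro i _; exact tsum_nonneg fun m => hg0 i m
            · intro i _; exact hS i
        _ = (∏ i, Real.exp (-(min (lift x i) (2 * Real.pi - lift x i)) ^ 2 / (2 * ε))) *
              (2 * Real.exp 5) ^ d := by
            rw [Finset.prod_mul_distrib, Finset.prod_const, Finset.card_univ, Fintype.card_fin]
        _ = Real.exp (-(tdist x 0) ^ 2 / (2 * ε)) * (2 ^ d * Real.exp (5 * d)) := by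
            rw [hE]
            congr 1
            rw [mul_pow, show ((5:ℝ) * d) = (d:ℝ) * 5 by ring, Real.exp_nat_mul]
    calc (2 * Real.pi * ε) ^ (-(d : ℝ) / 2) * ∑' k : Fin d → ℤ, ∏ i, g i (k i)
        ≤ (2 * Real.pi * ε) ^ (-(d : ℝ) / 2) *
            (Real.exp (-(tdist x 0) ^ 2 / (2 * ε)) * (2 ^ d * Real.exp (5 * d))) :=
          mul_le_mul_of_nonneg_left htsum_le hC.le
      _ ≤ 2 ^ (d + 1) * Real.exp (5 * d) *
            ((2 * Real.pi * ε) ^ (-(d : ℝ) / 2) * Real.exp (-(tdist x 0) ^ 2 / (2 * ε))) := by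
          have h2d : (2:ℝ) ^ d ≤ 2 ^ (d+1) := by
            apply pow_le_pow_right₀ (by norm_num)
            omega
          have hEpos := Real.exp_pos (-(tdist x 0) ^ 2 / (2 * ε))
          have hepos := Real.exp_pos ((5:ℝ) * d)
          nlinarith [mul_pos hC hEpos, mul_pos (mul_pos hC hEpos) hepos,
            mul_le_mul_of_nonneg_right h2d (mul_pos (mul_pos hC hEpos) hepos).le]
end
end
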